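/- arXiv:2102.08859 — 12 statements merged into one kernel-verified Lean document; each statement's English description precedes it below -/
import Mathlib

section
/- Let A and B be associative unital rings, f : A → B a ring homomorphism, let V and W_B be left B-modules and W_A a left A-module. Assume W_B is a direct summand of V as a B-module. Set E := End_B(V), and regard Hom_B(W_B, V) and Hom_A(W_A, V_f) as left E-modules, where e ∈ E acts by post-composition (with e, resp. with e viewed as an A-linear endomorphism of V_f). Then the natural map from Hom_A(W_A, (W_B)_f) to Hom_E(Hom_B(W_B, V), Hom_A(W_A, V_f)), sending g to the map h ↦ h_f ∘ g (where h_f : (W_B)_f → V_f is h viewed as A-linear), is an isomorphism of abelian groups. -/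
/-- Let `A`, `B` be rings, `f : A → B` a ring homomorphism, `V`, `W_B`
left `B`-modules and `W_A` a left `A`-module, with `W_B` a direct summand of `V`
(witnessed by `ι`, `π` with `π ∘ ι = id`).  Writing `Hom_A(W_A, M_f)` for the group of
`f`-semilinear maps `W_A →ₛₗ[f] M` (i.e. `A`-linear maps into `M` with scalars restricted
along `f`), the natural map
`Hom_A(W_A, (W_B)_f) → Hom_E(Hom_B(W_B, V), Hom_A(W_A, V_f))`, `g ↦ (h ↦ h_f ∘ g)`,
where `E = End_B(V)` acts by post-composition, is an isomorphism of abelian groups: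
each `g` is sent to an additive `E`-equivariant map, the assignment is additive,
injective, and hits every additive `E`-equivariant map. -/
theorem stmt0 {A B : Type*} [Ring A] [Ring B] (f : A →+* B)
    (V W_B W_A : Type*) [AddCommGroup V] [Module B V]
    [AddCommGroup W_B] [Module B W_B]
    [AddCommGroup W_A] [Module A W_A]
    (ι : W_B →ₗ[B] V) (π : V →ₗ[B] W_B) (hπι : LinearMap.comp π ι = LinearMap.id) :
    (∀ (g : W_A →ₛₗ[f] W_B) (h₁ h₂ : W_B →ₗ[B] V),
        LinearMap.comp (h₁ + h₂) g = LinearMap.comp h₁ g + LinearMap.comp h₂ g) ∧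
    (∀ (g : W_A →ₛₗ[f] W_B) (e : Module.End B V) (h : W_B →ₗ[B] V),
        LinearMap.comp (LinearMap.comp e h) g = LinearMap.comp e (LinearMap.comp h g)) ∧
    (∀ (g₁ g₂ : W_A →ₛₗ[f] W_B) (h : W_B →ₗ[B] V),
        LinearMap.comp h (g₁ + g₂) = LinearMap.comp h g₁ + LinearMap.comp h g₂) ∧
    Function.Injective
      (fun (g : W_A →ₛₗ[f] W_B) => fun (h : W_B →ₗ[B] V) => LinearMap.comp h g) ∧
    (∀ F : (W_B →ₗ[B] V) → (W_A →ₛₗ[f] V),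
        (∀ h₁ h₂ : W_B →ₗ[B] V, F (h₁ + h₂) = F h₁ + F h₂) →
        (∀ (e : Module.End B V) (h : W_B →ₗ[B] V),
            F (LinearMap.comp e h) = LinearMap.comp e (F h)) →
        ∃ g : W_A →ₛₗ[f] W_B, ∀ h : W_B →ₗ[B] V, F h = LinearMap.comp h g) := by
  refine ⟨?_, ?_, ?_, ?_, ?_⟩
  · intro g h₁ h₂; ext x; simp
  · intro g e h; ext x; simp
  · intro g₁ g₂ h; ext x; simp
  · intro g₁ g₂ hg
    have h : LinearMap.comp ι g₁ = LinearMap.comp ι g₂ := congrFun hg ι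
    ext x
    have := congrArg (fun (k : W_A →ₛₗ[f] V) => π (k x)) h
    simpa using
      (congrArg (fun (k : W_A →ₛₗ[f] W_B) => k x)
        (by
          calc g₁ = LinearMap.comp π (LinearMap.comp ι g₁) := by
                rw [← LinearMap.comp_assoc, hπι]; ext y; simp
            _ = LinearMap.comp π (LinearMap.comp ι g₂) := by rw [h]
            _ = g₂ := by rw [← LinearMap.comp_assoc, hπι]; ext y; simp))
  · intro F _ hE
    refine ⟨LinearMap.comp π (F ι), fun h => ?_⟩
    have key : F h = LinearMap.comp (LinearMap.comp h π) (F ι) := by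
      have : LinearMap.comp (LinearMap.comp h π : Module.End B V) ι = h := by
        rw [LinearMap.comp_assoc, hπι]; ext y; simp
      rw [← hE (LinearMap.comp h π) ι, this]
    rw [key, LinearMap.comp_assoc]
end

section
/- With the notation of the context, assume n = 2m is even and r is odd. Then Y_{Q,n} has finite index in Y, and [Y : Y_{Q,n}] = 2·m^r·n_{(r)}. -/
/-- The symmetric bilinear form on `Y = ℤ^{r+1}` (realized as `(Fin r → ℤ) × ℤ` with basis
`e_1, …, e_r` the standard vectors of the first factor and `e_0 = (0,1)`) attached to the
`n`-fold cover of `GSp_{2r}` of similitudes-splitting type: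
`B(e_i, e_i) = -2`, `B(e_i, e_j) = 0` for `i ≠ j`, `B(e_i, e_0) = 1`, `B(e_0, e_0) = 0`. -/
def GSpB (r : ℕ) (x y : (Fin r → ℤ) × ℤ) : ℤ :=
  -2 * (∑ i, x.1 i * y.1 i) + (∑ i, x.1 i) * y.2 + x.2 * (∑ i, y.1 i)

lemma GSpB_add_left (r : ℕ) (a b y : (Fin r → ℤ) × ℤ) :
    GSpB r (a + b) y = GSpB r a y + GSpB r b y := by
  simp only [GSpB, Prod.fst_add, Prod.snd_add, Pi.add_apply, add_mul,
    Finset.sum_add_distrib]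
  ring

lemma GSpB_neg_left (r : ℕ) (a y : (Fin r → ℤ) × ℤ) :
    GSpB r (-a) y = -GSpB r a y := by
  simp only [GSpB, Prod.fst_neg, Prod.snd_neg, Pi.neg_apply, neg_mul,
    Finset.sum_neg_distrib]
  ring

/-- The lattice `Y_{Q,n} = {y ∈ Y : B(y, y') ∈ nℤ for all y' ∈ Y}`. -/
def YQn (r n : ℕ) : AddSubgroup ((Fin r → ℤ) × ℤ) where
  carrier := {y | ∀ y', (n : ℤ) ∣ GSpB r y y'}
  zero_mem' := by
    intro y'
    simp [GSpB]
  add_mem' := by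
    intro a b ha hb y'
    rw [GSpB_add_left]
    exact dvd_add (ha y') (hb y')
  neg_mem' := by
    intro a ha y'
    rw [GSpB_neg_left]
    exact dvd_neg.mpr (ha y')

/-- The lattice `Y_0 = ℤe_1 ⊕ ⋯ ⊕ ℤe_r` (the cocharacter lattice of `Sp_{2r}`). -/
def Y0 (r : ℕ) : AddSubgroup ((Fin r → ℤ) × ℤ) where
  carrier := {y | y.2 = 0}
  zero_mem' := rfl
  add_mem' := by
    intro a b ha hb
    have ha' : a.2 = 0 := ha
    have hb' : b.2 = 0 := hb
    show (a + b).2 = 0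
    simp [Prod.snd_add, ha', hb']
  neg_mem' := by
    intro a ha
    have ha' : a.2 = 0 := ha
    show (-a).2 = 0
    simp [Prod.snd_neg, ha']

/-- The lattice `Y_{0,Q,n} = {y ∈ Y_0 : B(y, y') ∈ nℤ for all y' ∈ Y_0}`. -/
def Y0Qn (r n : ℕ) : AddSubgroup ((Fin r → ℤ) × ℤ) where
  carrier := {y | y.2 = 0 ∧ ∀ y' : (Fin r → ℤ) × ℤ, y'.2 = 0 → (n : ℤ) ∣ GSpB r y y'}
  zero_mem' := ⟨rfl, fun y' _ => by simp [GSpB]⟩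
  add_mem' := by
    rintro a b ⟨ha2, ha⟩ ⟨hb2, hb⟩
    refine ⟨?_, fun y' hy' => ?_⟩
    · simp only [Prod.snd_add, ha2, hb2, add_zero]
    · rw [GSpB_add_left]
      exact dvd_add (ha y' hy') (hb y' hy')
  neg_mem' := by
    rintro a ⟨ha2, ha⟩
    refine ⟨?_, fun y' hy' => ?_⟩
    · simp only [Prod.snd_neg, ha2, neg_zero]
    · rw [GSpB_neg_left]
      exact dvd_neg.mpr (ha y' hy')

/-- φ : ℤ × ℤ^r → Y, (t, a) ↦ (t + m a, 2t). -/
def auxPhi (r m : ℕ) : ℤ × (Fin r → ℤ) →+ (Fin r → ℤ) × ℤ :=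
  AddMonoidHom.mk' (fun p => ((fun i => p.1 + (m : ℤ) * p.2 i), 2 * p.1))
    (by intro a b; ext i <;> simp <;> ring)

/-- φ₂ : Y → Y, (x, t) ↦ (x, 2t), range = {even last coordinate}. -/
def auxPhi2 (r : ℕ) : (Fin r → ℤ) × ℤ →+ (Fin r → ℤ) × ℤ :=
  AddMonoidHom.mk' (fun p => (p.1, 2 * p.2)) (by intro a b; ext i <;> simp <;> ring)

/-- ρ : ℤ × ℤ^r → ZMod 2m, (t,a) ↦ r t + m ∑ aᵢ. -/
def auxRho (r m : ℕ) : ℤ × (Fin r → ℤ) →+ ZMod (2 * m) :=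
  AddMonoidHom.mk' (fun p => (((r : ℤ) * p.1 + (m : ℤ) * ∑ i, p.2 i : ℤ) : ZMod (2 * m)))
    (by
      intro a b
      simp only [Prod.fst_add, Prod.snd_add, Pi.add_apply]
      push_cast [Finset.sum_add_distrib]
      ring)

/-- η : Y → (ZMod m)^r, (x,t) ↦ (xᵢ - t). -/
def auxEta (r m : ℕ) : (Fin r → ℤ) × ℤ →+ (Fin r → ZMod m) :=
  AddMonoidHom.mk' (fun p => fun i => ((p.1 i - p.2 : ℤ) : ZMod m))
    (by
      intro a b
      funext i
      simp only [Prod.fst_add, Prod.snd_add, Pi.add_apply]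
      push_cast
      ring)

/-- π : Y → ZMod 2, (x,t) ↦ t. -/
def auxPi (r : ℕ) : (Fin r → ℤ) × ℤ →+ ZMod 2 :=
  AddMonoidHom.mk' (fun p => ((p.2 : ℤ) : ZMod 2))
    (by intro a b; simp only [Prod.snd_add]; push_cast; ring)

lemma GSpB_auxPhi (r m : ℕ) (p : ℤ × (Fin r → ℤ)) (y : (Fin r → ℤ) × ℤ) :
    GSpB r (auxPhi r m p) y
      = 2 * m * (-∑ i, p.2 i * y.1 i) + ((r : ℤ) * p.1 + m * ∑ i, p.2 i) * y.2 := by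
  simp only [GSpB, auxPhi, AddMonoidHom.mk'_apply]
  have h1 : ∑ i, (p.1 + (m : ℤ) * p.2 i) * y.1 i
      = p.1 * ∑ i, y.1 i + m * ∑ i, p.2 i * y.1 i := by
    rw [Finset.mul_sum, Finset.mul_sum, ← Finset.sum_add_distrib]
    congr 1; funext i; ring
  have h2 : ∑ i : Fin r, (p.1 + (m : ℤ) * p.2 i) = r * p.1 + m * ∑ i, p.2 i := by
    rw [Finset.sum_add_distrib, Finset.sum_const, Finset.card_univ, Fintype.card_fin,
      Finset.mul_sum]
    push_cast; ring
  rw [h1, h2]; ring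

lemma GSpB_basis (r : ℕ) (y : (Fin r → ℤ) × ℤ) (i : Fin r) :
    GSpB r y (fun j => if j = i then 1 else 0, 0) = -2 * y.1 i + y.2 := by
  simp [GSpB, Finset.sum_ite_eq', mul_ite]

lemma auxC (r m : ℕ) (hr : 1 ≤ r) (hm : 1 ≤ m) :
    YQn r (2 * m) ≤ (auxPhi r m).range := by
  intro y hy
  have key : ∀ i : Fin r, (2 * (m : ℤ)) ∣ 2 * y.1 i - y.2 := by
    intro i
    have h := hy (fun j => if j = i then 1 else 0, 0)
    rw [GSpB_basis] at h
    push_cast at h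
    have h2 := dvd_neg.mpr h
    have : -(-2 * y.1 i + y.2) = 2 * y.1 i - y.2 := by ring
    rwa [this] at h2
  have h2 : (2 : ℤ) ∣ y.2 := by
    have h := key ⟨0, hr⟩
    have h1 : (2 : ℤ) ∣ 2 * y.1 ⟨0, hr⟩ - y.2 := dvd_trans ⟨m, rfl⟩ h
    have := dvd_sub (dvd_mul_right 2 (y.1 ⟨0, hr⟩)) h1
    simpa using this
  obtain ⟨t, ht⟩ := h2
  have hmd : ∀ i, (m : ℤ) ∣ y.1 i - t := by
    intro i
    have h := key i
    rw [ht] at h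
    have h' : 2 * (m : ℤ) ∣ 2 * (y.1 i - t) := by
      convert h using 1; ring
    exact (mul_dvd_mul_iff_left (two_ne_zero)).mp h'
  refine ⟨(t, fun i => (y.1 i - t) / m), ?_⟩
  have hm0 : (m : ℤ) ≠ 0 := by exact_mod_cast (Nat.pos_of_ne_zero (by omega)).ne'
  simp only [auxPhi, AddMonoidHom.mk'_apply]
  refine Prod.ext (funext fun i => ?_) ?_
  · simp only []
    rw [Int.mul_ediv_cancel' (hmd i)]
    ring
  · exact ht.symm

lemma auxD (r m : ℕ) (p : ℤ × (Fin r → ℤ)) :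
    auxPhi r m p ∈ YQn r (2 * m) ↔ p ∈ (auxRho r m).ker := by
  constructor
  · intro h
    have h1 := h ((fun _ => 0), 1)
    rw [GSpB_auxPhi] at h1
    simp only [mul_zero, mul_one, Finset.sum_const_zero, neg_zero, add_zero, zero_add] at h1
    rw [AddMonoidHom.mem_ker]
    simp only [auxRho, AddMonoidHom.mk'_apply]
    rw [ZMod.intCast_zmod_eq_zero_iff_dvd]
    push_cast
    push_cast at h1
    exact h1
  · intro h y'
    rw [AddMonoidHom.mem_ker] at h
    simp only [auxRho, AddMonoidHom.mk'_apply] at h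
    rw [ZMod.intCast_zmod_eq_zero_iff_dvd] at h
    push_cast at h
    rw [GSpB_auxPhi]
    push_cast
    exact dvd_add (Dvd.intro _ rfl) (h.mul_right _)

lemma auxB (r m : ℕ) (hm : 1 ≤ m) :
    ((auxPhi r m).range.comap (auxPhi2 r)) = (auxEta r m).ker := by
  ext ⟨x, t⟩
  simp only [AddSubgroup.mem_comap, AddMonoidHom.mem_range, AddMonoidHom.mem_ker,
    auxPhi, auxPhi2, auxEta, AddMonoidHom.mk'_apply]
  constructor
  · rintro ⟨p, hp⟩
    rw [Prod.ext_iff] at hp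
    obtain ⟨hp1, hp2⟩ := hp
    have hpt : p.1 = t := by
      simp only [] at hp2
      omega
    funext i
    rw [Pi.zero_apply]
    have := congrFun hp1 i
    simp only [] at this
    rw [← this, hpt]
    have : (t + (m : ℤ) * p.2 i - t : ℤ) = m * p.2 i := by ring
    rw [this]
    rw [ZMod.intCast_zmod_eq_zero_iff_dvd]
    exact Dvd.dvd.mul_right (by exact_mod_cast dvd_refl (m:ℤ)) _
  · intro h
    have hd : ∀ i, (m : ℤ) ∣ x i - t := by
      intro i
      have := congrFun h i
      rwa [Pi.zero_apply, ZMod.intCast_zmod_eq_zero_iff_dvd] at this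
    refine ⟨(t, fun i => (x i - t) / m), ?_⟩
    refine Prod.ext (funext fun i => ?_) rfl
    simp only []
    rw [Int.mul_ediv_cancel' (hd i)]
    ring

lemma auxA (r : ℕ) : (auxPhi2 r).range = (auxPi r).ker := by
  ext ⟨x, t⟩
  simp only [AddMonoidHom.mem_range, AddMonoidHom.mem_ker, auxPhi2, auxPi,
    AddMonoidHom.mk'_apply]
  rw [ZMod.intCast_zmod_eq_zero_iff_dvd]
  constructor
  · rintro ⟨p, hp⟩
    rw [Prod.ext_iff] at hp
    obtain ⟨_, hp2⟩ := hp
    simp only [] at hp2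
    exact ⟨p.2, by exact_mod_cast hp2.symm⟩
  · rintro ⟨c, hc⟩
    exact ⟨(x, c), Prod.ext rfl (by simpa using hc.symm)⟩

lemma auxE (r m : ℕ) (hr : 1 ≤ r) :
    (auxRho r m).range = AddSubgroup.zmultiples (((Nat.gcd r m : ℤ) : ZMod (2 * m))) := by
  apply le_antisymm
  · rintro _ ⟨p, rfl⟩
    simp only [auxRho, AddMonoidHom.mk'_apply]
    have h1 : ((Nat.gcd r m : ℤ)) ∣ (r : ℤ) * p.1 + (m : ℤ) * ∑ i, p.2 i := by
      exact dvd_add ((Int.natCast_dvd_natCast.mpr (Nat.gcd_dvd_left r m)).mul_right _)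
        ((Int.natCast_dvd_natCast.mpr (Nat.gcd_dvd_right r m)).mul_right _)
    obtain ⟨c, hc⟩ := h1
    rw [hc]
    refine ⟨c, ?_⟩
    push_cast
    rw [zsmul_eq_mul]
    push_cast
    ring
  · rw [AddSubgroup.zmultiples_le]
    refine ⟨(Nat.gcdA r m, fun i => if i = ⟨0, hr⟩ then Nat.gcdB r m else 0), ?_⟩
    simp only [auxRho, AddMonoidHom.mk'_apply, Finset.sum_ite_eq', Finset.mem_univ, if_true]
    rw [← Nat.gcd_eq_gcd_ab]


/-- For `n = 2m` even and `r` odd, `Y_{Q,n}` has finite index in `Y`,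
equal to `2·m^r·n_{(r)}` where `n_{(r)} = n / gcd(n, r)`. -/
theorem stmt4 (r m : ℕ) (hr : 1 ≤ r) (hrodd : Odd r) (hm : 1 ≤ m) :
    (YQn r (2 * m)).index ≠ 0 ∧
    (YQn r (2 * m)).index = 2 * m ^ r * (2 * m / Nat.gcd (2 * m) r) := by
  have hm0 : m ≠ 0 := by omega
  have hn0 : 2 * m ≠ 0 := by omega
  -- index of range φ₂ is 2
  have hπ : Function.Surjective (auxPi r) := by
    intro c
    refine ⟨((fun _ => 0), (c.val : ℤ)), ?_⟩
    simp [auxPi, ZMod.natCast_val, ZMod.cast_id]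
  have iA : (auxPhi2 r).range.index = 2 := by
    rw [auxA, AddSubgroup.index_ker, AddMonoidHom.range_eq_top.mpr hπ,
      AddSubgroup.card_top, Nat.card_zmod]
  -- index of comap φ₂ (range φ) is m ^ r
  haveI : NeZero m := ⟨hm0⟩
  have hη : Function.Surjective (auxEta r m) := by
    intro v
    refine ⟨((fun i => ((v i).val : ℤ)), 0), ?_⟩
    funext i
    simp [auxEta, ZMod.natCast_val, ZMod.cast_id]
  have iB : ((auxPhi r m).range.comap (auxPhi2 r)).index = m ^ r := by
    rw [auxB r m hm, AddSubgroup.index_ker, AddMonoidHom.range_eq_top.mpr hη,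
      AddSubgroup.card_top, Nat.card_pi]
    simp [Nat.card_zmod]
  -- index of range φ is m ^ r * 2
  have hle : (auxPhi r m).range ≤ (auxPhi2 r).range := by
    rintro _ ⟨p, rfl⟩
    exact ⟨((fun i => p.1 + (m : ℤ) * p.2 i), p.1), rfl⟩
  have iRange : (auxPhi r m).range.index = m ^ r * 2 := by
    rw [← AddSubgroup.relIndex_mul_index hle, ← AddSubgroup.index_comap, iB, iA]
  -- index of ker ρ is 2m / gcd r m
  have iL : ((auxRho r m).ker).index = 2 * m / Nat.gcd r m := by
    rw [AddSubgroup.index_ker, auxE r m hr]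
    rw [Nat.card_zmultiples]
    have : (((Nat.gcd r m : ℤ)) : ZMod (2 * m)) = ((Nat.gcd r m : ℕ) : ZMod (2 * m)) := by
      push_cast; ring
    rw [this, ZMod.addOrderOf_coe _ hn0]
    congr 1
    exact Nat.gcd_eq_right (dvd_trans (Nat.gcd_dvd_right r m) ⟨2, by ring⟩)
  -- comap φ YQn = ker ρ
  have hcomap : (YQn r (2 * m)).comap (auxPhi r m) = (auxRho r m).ker := by
    ext p
    exact auxD r m p
  -- assemble
  have main : (YQn r (2 * m)).index = (2 * m / Nat.gcd r m) * (m ^ r * 2) := by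
    rw [← AddSubgroup.relIndex_mul_index (auxC r m hr hm), ← AddSubgroup.index_comap,
      hcomap, iL, iRange]
  have hgcd : Nat.gcd (2 * m) r = Nat.gcd r m := by
    rw [Nat.Coprime.gcd_mul_left_cancel m (Nat.coprime_two_left.mpr hrodd), Nat.gcd_comm]
  have hdiv : 2 * m / Nat.gcd r m ≠ 0 := by
    have h1 : Nat.gcd r m ∣ 2 * m := dvd_trans (Nat.gcd_dvd_right r m) ⟨2, by ring⟩
    have h2 : 0 < Nat.gcd r m := Nat.gcd_pos_of_pos_right r (by omega)
    exact Nat.ne_of_gt (Nat.div_pos (Nat.le_of_dvd (by omega) h1) h2)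
  constructor
  · rw [main]
    positivity
  · rw [main, hgcd]
    ring
end

section
/- With the notation of the context, assume n is even and r is odd. Then Y_0 + Y_{Q,n} = { y ∈ Y : n_{(r)} divides y_0 }; consequently the quotient group Y/(Y_0 + Y_{Q,n}) is cyclic of order n_{(r)}, generated by the class of e_0. -/
/-- For `n` even and `r` odd,
`Y_0 + Y_{Q,n} = {y ∈ Y : n_{(r)} ∣ y_0}`; consequently `Y/(Y_0 + Y_{Q,n})` is cyclic of
order `n_{(r)} = n / gcd(n, r)`, generated by the class of `e_0`. -/
theorem stmt5 (r n : ℕ) (hr : 1 ≤ r) (hrodd : Odd r) (hneven : Even n) (hn : 1 ≤ n) :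
    (((Y0 r ⊔ YQn r n : AddSubgroup ((Fin r → ℤ) × ℤ))) : Set ((Fin r → ℤ) × ℤ))
        = {y | ((n / Nat.gcd n r : ℕ) : ℤ) ∣ y.2} ∧
    Nat.card (((Fin r → ℤ) × ℤ) ⧸ (Y0 r ⊔ YQn r n)) = n / Nat.gcd n r ∧
    ∀ x : ((Fin r → ℤ) × ℤ) ⧸ (Y0 r ⊔ YQn r n),
      ∃ k : ℤ, x = k • (QuotientAddGroup.mk (((0 : Fin r → ℤ), 1) : (Fin r → ℤ) × ℤ)) := by
  
  classical
  -- Setup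
  have hg0 : 0 < Nat.gcd n r := Nat.gcd_pos_of_pos_left _ hn
  set g := Nat.gcd n r with hgdef
  set d := n / g with hddef
  have hnd : n = g * d := (Nat.mul_div_cancel' (Nat.gcd_dvd_left n r)).symm
  have hd0 : 0 < d := Nat.div_pos (Nat.le_of_dvd hn (Nat.gcd_dvd_left n r)) hg0
  obtain ⟨r', hr'⟩ : g ∣ r := Nat.gcd_dvd_right n r
  have hgodd : Odd g := by
    rcases Nat.even_or_odd g with hg | hg
    · exact absurd (hr' ▸ hg.mul_right r') (Nat.not_even_iff_odd.mpr hrodd)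
    · exact hg
  have hdeven : Even d := by
    rcases Nat.even_or_odd d with hd | hd
    · exact hd
    · exact absurd (hnd ▸ (hgodd.mul hd)) (Nat.not_odd_iff_even.mpr hneven)
  obtain ⟨e, he⟩ : ∃ e, d = 2 * e := ⟨d / 2, (Nat.two_mul_div_two_of_even hdeven).symm⟩
  obtain ⟨q, hq⟩ := hrodd
  have hcop : Nat.Coprime d r' := by
    have : r' = r / g := by rw [hr', Nat.mul_div_cancel_left _ hg0]
    rw [this, hddef]
    exact Nat.coprime_div_gcd_div_gcd hg0
  -- integer cast facts
  have hnZ : (n : ℤ) = 2 * (g : ℤ) * (e : ℤ) := by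
    rw [hnd, he]; push_cast; ring
  have hdZ : ((d : ℕ) : ℤ) = 2 * (e : ℤ) := by rw [he]; push_cast; ring
  have hrZ1 : (r : ℤ) = (g : ℤ) * (r' : ℤ) := by rw [hr']; push_cast; ring
  have hrZ2 : (r : ℤ) = 2 * (q : ℤ) + 1 := by rw [hq]; push_cast; ring
  -- key membership characterization
  have hmem : ∀ y : (Fin r → ℤ) × ℤ, y ∈ Y0 r ⊔ YQn r n ↔ ((d : ℕ) : ℤ) ∣ y.2 := by
    intro y
    constructor
    · intro hy
      obtain ⟨a, ha, b, hb, hab⟩ := AddSubgroup.mem_sup.mp hy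
      have ha2 : a.2 = 0 := ha
      have hy2 : y.2 = b.2 := by rw [← hab, Prod.snd_add, ha2, zero_add]
      have h1 := hb ((fun _ => (1 : ℤ)), 0)
      have h2 := hb ((0 : Fin r → ℤ), 1)
      simp only [GSpB, mul_one, mul_zero, Pi.zero_apply, zero_mul, Finset.sum_const_zero,
        add_zero, zero_add, Finset.sum_const, Finset.card_univ, Fintype.card_fin,
        nsmul_eq_mul] at h1 h2
      -- h1 : n ∣ -2 * ∑ b.1 i + b.2 * r ; h2 : n ∣ ∑ b.1 i
      have h3 : (n : ℤ) ∣ (r : ℤ) * b.2 := by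
        have := dvd_add h1 (h2.mul_left 2)
        have heq : -2 * (∑ i, b.1 i) + b.2 * (r : ℤ) + 2 * (∑ i, b.1 i)
            = (r : ℤ) * b.2 := by ring
        rwa [heq] at this
      have h4 : ((d : ℕ) : ℤ) ∣ (r' : ℤ) * b.2 := by
        have hgne : (g : ℤ) ≠ 0 := by exact_mod_cast hg0.ne'
        have hdvd : (g : ℤ) * (d : ℤ) ∣ (g : ℤ) * ((r' : ℤ) * b.2) := by
          have hnn : (n : ℤ) = (g : ℤ) * (d : ℤ) := by rw [hnd]; push_cast; ring
          have heq : (g : ℤ) * ((r' : ℤ) * b.2) = (r : ℤ) * b.2 := by rw [hrZ1]; ring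
          rw [← hnn, heq]; exact h3
        exact (mul_dvd_mul_iff_left hgne).mp hdvd
      have hic : IsCoprime ((d : ℕ) : ℤ) ((r' : ℕ) : ℤ) := by
        rw [Nat.isCoprime_iff_coprime]; exact hcop
      rw [hy2]
      exact hic.dvd_of_dvd_mul_left h4
    · rintro ⟨k, hk⟩
      set c : ℤ := (e : ℤ) * k + (g : ℤ) * (e : ℤ) * k * (r' : ℤ) with hc
      set z : (Fin r → ℤ) × ℤ := ((fun _ => c), y.2) with hz
      have hzmem : z ∈ YQn r n := by
        intro y'
        refine ⟨k * (r' : ℤ) * (((q : ℤ) + 1) * y'.2 - (∑ i, y'.1 i)), ?_⟩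
        show -2 * (∑ i, c * y'.1 i) + (∑ i : Fin r, c) * y'.2 + y.2 * (∑ i, y'.1 i) = _
        rw [← Finset.mul_sum, Finset.sum_const, Finset.card_univ, Fintype.card_fin,
          nsmul_eq_mul, hk, hdZ, hnZ, hc]
        linear_combination ((e : ℤ) * k * y'.2 * ((g : ℤ) * (r' : ℤ))) * hrZ2
          + ((e : ℤ) * k * y'.2) * hrZ1
      have hymz : y - z ∈ Y0 r := by
        show (y - z).2 = 0
        simp [hz]
      have : y = (y - z) + z := by abel
      rw [this]
      exact AddSubgroup.add_mem_sup hymz hzmem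
  haveI : NeZero d := ⟨hd0.ne'⟩
  refine ⟨?_, ?_, ?_⟩
  · ext y
    exact hmem y
  · -- cardinality
    let φ : ((Fin r → ℤ) × ℤ) →+ ZMod d :=
      (Int.castAddHom (ZMod d)).comp (AddMonoidHom.snd (Fin r → ℤ) ℤ)
    have hker : φ.ker = Y0 r ⊔ YQn r n := by
      ext y
      rw [AddMonoidHom.mem_ker, hmem y]
      show ((y.2 : ℤ) : ZMod d) = 0 ↔ _
      rw [ZMod.intCast_zmod_eq_zero_iff_dvd]
    have hsurj : Function.Surjective φ := by
      intro w
      obtain ⟨a, ha⟩ := ZMod.intCast_surjective (n := d) w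
      exact ⟨((0 : Fin r → ℤ), a), ha⟩
    have hequiv := QuotientAddGroup.quotientKerEquivOfSurjective φ hsurj
    have hcongr := QuotientAddGroup.quotientAddEquivOfEq hker.symm
    rw [Nat.card_congr (hcongr.toEquiv.trans hequiv.toEquiv), Nat.card_zmod]
  · intro x
    obtain ⟨y, rfl⟩ := QuotientAddGroup.mk_surjective x
    refine ⟨y.2, ?_⟩
    have : y.2 • (QuotientAddGroup.mk (((0 : Fin r → ℤ), 1) : (Fin r → ℤ) × ℤ)
        : ((Fin r → ℤ) × ℤ) ⧸ (Y0 r ⊔ YQn r n))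
        = QuotientAddGroup.mk (y.2 • (((0 : Fin r → ℤ), 1) : (Fin r → ℤ) × ℤ)) := rfl
    rw [this, QuotientAddGroup.eq]
    refine AddSubgroup.mem_sup_left ?_
    show (-y + y.2 • (((0 : Fin r → ℤ), 1) : (Fin r → ℤ) × ℤ)).2 = 0
    simp
end

section
/- With the notation of the context, assume n = 2m is even. Then Y_{0,Q,n} = mY_0, the intersection Y_0 ∩ Y_{Q,n} equals { y ∈ Y_0 : m divides y_i for all 1 ≤ i ≤ r and n divides y_1 + ⋯ + y_r }, and the index [Y_{0,Q,n} : Y_0 ∩ Y_{Q,n}] equals 2. -/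
/-- For `n = 2m` even: `Y_{0,Q,n} = mY_0`,
`Y_0 ∩ Y_{Q,n} = {y ∈ Y_0 : m ∣ y_i for all i and n ∣ y_1 + ⋯ + y_r}`, and
`[Y_{0,Q,n} : Y_0 ∩ Y_{Q,n}] = 2`. -/
theorem stmt6 (r m : ℕ) (hr : 1 ≤ r) (hm : 1 ≤ m) :
    ((Y0Qn r (2 * m) : AddSubgroup ((Fin r → ℤ) × ℤ)) : Set ((Fin r → ℤ) × ℤ))
        = {y | y.2 = 0 ∧ ∀ i, (m : ℤ) ∣ y.1 i} ∧
    ((Y0 r ⊓ YQn r (2 * m) : AddSubgroup ((Fin r → ℤ) × ℤ)) : Set ((Fin r → ℤ) × ℤ))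
        = {y | y.2 = 0 ∧ (∀ i, (m : ℤ) ∣ y.1 i) ∧ ((2 * m : ℕ) : ℤ) ∣ ∑ i, y.1 i} ∧
    (Y0 r ⊓ YQn r (2 * m)).relIndex (Y0Qn r (2 * m)) = 2 := by
  have hmz : (m : ℤ) ≠ 0 := by exact_mod_cast Nat.one_le_iff_ne_zero.mp hm
  -- key computations of the form
  have hBi : ∀ (y : (Fin r → ℤ) × ℤ) (i : Fin r),
      GSpB r y (Pi.single i 1, 0) = -2 * y.1 i + y.2 := fun y i => by
    simp [GSpB, Pi.single_apply, Finset.sum_ite_eq', mul_ite]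
  have hB0 : ∀ y : (Fin r → ℤ) × ℤ, GSpB r y ((0 : Fin r → ℤ), 1) = ∑ i, y.1 i :=
    fun y => by simp [GSpB]
  -- from 2m ∣ -2 y_i we get m ∣ y_i
  have hdvd_of : ∀ y : (Fin r → ℤ) × ℤ, y.2 = 0 →
      (∀ i, ((2 * m : ℕ) : ℤ) ∣ GSpB r y (Pi.single i 1, 0)) → ∀ i, (m : ℤ) ∣ y.1 i := by
    intro y h2 h i
    have h' := h i
    rw [hBi y i, h2, add_zero] at h'
    have h'' : (2 : ℤ) * m ∣ 2 * (-y.1 i) := by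
      push_cast at h'
      convert h' using 1
      ring
    have := (mul_dvd_mul_iff_left (by norm_num : (2:ℤ) ≠ 0)).mp h''
    exact (dvd_neg.mp this)
  -- 2m divides -2 * ∑ y_i y'_i when m ∣ each y_i
  have hsum_dvd : ∀ y y' : (Fin r → ℤ) × ℤ, (∀ i, (m : ℤ) ∣ y.1 i) →
      ((2 * m : ℕ) : ℤ) ∣ -2 * ∑ i, y.1 i * y'.1 i := by
    intro y y' hd
    obtain ⟨t, ht⟩ := Finset.dvd_sum (fun i _ => (hd i).mul_right (y'.1 i))
    exact ⟨-t, by push_cast; rw [ht]; ring⟩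
  have h1 : ((Y0Qn r (2 * m) : AddSubgroup ((Fin r → ℤ) × ℤ)) : Set ((Fin r → ℤ) × ℤ))
      = {y | y.2 = 0 ∧ ∀ i, (m : ℤ) ∣ y.1 i} := by
    ext y
    constructor
    · rintro ⟨h2, h⟩
      exact ⟨h2, hdvd_of y h2 (fun i => h _ rfl)⟩
    · rintro ⟨h2, hd⟩
      refine ⟨h2, fun y' hy' => ?_⟩
      have : GSpB r y y' = -2 * ∑ i, y.1 i * y'.1 i := by
        simp [GSpB, h2, hy']
      rw [this]
      exact hsum_dvd y y' hd
  have h2 : ((Y0 r ⊓ YQn r (2 * m) : AddSubgroup ((Fin r → ℤ) × ℤ)) : Set ((Fin r → ℤ) × ℤ))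
      = {y | y.2 = 0 ∧ (∀ i, (m : ℤ) ∣ y.1 i) ∧ ((2 * m : ℕ) : ℤ) ∣ ∑ i, y.1 i} := by
    ext y
    constructor
    · rintro ⟨h2, h⟩
      refine ⟨h2, hdvd_of y h2 (fun i => h _), ?_⟩
      have := h ((0 : Fin r → ℤ), 1)
      rwa [hB0 y] at this
    · rintro ⟨h2, hd, hs⟩
      refine ⟨h2, fun y' => ?_⟩
      have : GSpB r y y' = -2 * (∑ i, y.1 i * y'.1 i) + (∑ i, y.1 i) * y'.2 := by
        simp [GSpB, h2]
      rw [this]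
      exact dvd_add (hsum_dvd y y' hd) (hs.mul_right _)
  refine ⟨h1, h2, ?_⟩
  -- index computation
  have hKmem : ∀ y : (Fin r → ℤ) × ℤ, y ∈ Y0Qn r (2 * m) ↔
      (y.2 = 0 ∧ ∀ i, (m : ℤ) ∣ y.1 i) := fun y => by
    rw [← SetLike.mem_coe, h1]; rfl
  have hHmem : ∀ y : (Fin r → ℤ) × ℤ, y ∈ Y0 r ⊓ YQn r (2 * m) ↔
      (y.2 = 0 ∧ (∀ i, (m : ℤ) ∣ y.1 i) ∧ ((2 * m : ℕ) : ℤ) ∣ ∑ i, y.1 i) := fun y => by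
    rw [← SetLike.mem_coe, h2]; rfl
  let f : Y0Qn r (2 * m) →+ ZMod (2 * m) :=
  { toFun := fun y => (((∑ i, (y : (Fin r → ℤ) × ℤ).1 i : ℤ)) : ZMod (2 * m))
    map_zero' := by simp
    map_add' := by
      rintro a b
      simp [Finset.sum_add_distrib] }
  have hker : (Y0 r ⊓ YQn r (2 * m)).addSubgroupOf (Y0Qn r (2 * m)) = f.ker := by
    ext y
    obtain ⟨hk2, hki⟩ := (hKmem y).mp y.2
    simp only [AddSubgroup.mem_addSubgroupOf, AddMonoidHom.mem_ker]
    rw [hHmem]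
    constructor
    · rintro ⟨-, -, hs⟩
      exact (ZMod.intCast_zmod_eq_zero_iff_dvd _ _).mpr hs
    · intro hf
      exact ⟨hk2, hki, (ZMod.intCast_zmod_eq_zero_iff_dvd _ _).mp hf⟩
  have hrange : f.range = AddSubgroup.zmultiples (((m : ℤ)) : ZMod (2 * m)) := by
    apply le_antisymm
    · rintro x ⟨y, rfl⟩
      obtain ⟨hk2, hki⟩ := (hKmem y).mp y.2
      obtain ⟨s, hs⟩ := Finset.dvd_sum (fun i _ => hki i)
      rw [AddSubgroup.mem_zmultiples_iff]
      refine ⟨s, ?_⟩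
      show s • (((m : ℤ)) : ZMod (2 * m)) = (((∑ i, (y : (Fin r → ℤ) × ℤ).1 i : ℤ)) : ZMod (2 * m))
      rw [hs, zsmul_eq_mul]
      push_cast
      ring
    · rw [AddSubgroup.zmultiples_le]
      refine ⟨⟨(Pi.single (⟨0, hr⟩ : Fin r) (m : ℤ), 0), ?_⟩, ?_⟩
      · rw [hKmem]
        refine ⟨rfl, fun i => ?_⟩
        rcases eq_or_ne i ⟨0, hr⟩ with h | h
        · subst h; simp
        · simp [Pi.single_apply, h]
      · simp only [f, AddMonoidHom.coe_mk, ZeroHom.coe_mk]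
        rw [Finset.sum_pi_single']
        simp
  show ((Y0 r ⊓ YQn r (2 * m)).addSubgroupOf (Y0Qn r (2 * m))).index = 2
  rw [hker, AddSubgroup.index_ker f, hrange]
  rw [show ((m : ℤ) : ZMod (2 * m)) = ((m : ℕ) : ZMod (2 * m)) by push_cast; rfl]
  rw [Nat.card_zmultiples, ZMod.addOrderOf_coe m (by positivity)]
  rw [show Nat.gcd (2 * m) m = m by
    rw [Nat.gcd_comm]; exact Nat.gcd_eq_left ⟨2, (mul_comm 2 m)⟩]
  exact Nat.mul_div_cancel 2 hm
end

section
/- With the notation of the context, assume n = 2m is even and r is odd, and define Y^𝔠 := { y ∈ Y : B(y, y') ∈ nℤ for all y' ∈ Y_{0,Q,n} }. Then Y^𝔠 = { y ∈ Y : 2 divides y_0 }, so [Y : Y^𝔠] = 2; moreover Y_0 + Y_{Q,n} ⊆ Y^𝔠, and the subgroup 𝒳^𝔠 := Y^𝔠/(Y_0 + Y_{Q,n}) has index 2 in 𝒳^Γ := Y/(Y_0 + Y_{Q,n}), the nontrivial coset being represented by the class of e_0. -/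
/-- The lattice `Y^𝔠 = {y ∈ Y : B(y, y') ∈ nℤ for all y' ∈ Y_{0,Q,n}}`. -/
def Yfc (r n : ℕ) : AddSubgroup ((Fin r → ℤ) × ℤ) where
  carrier := {y | ∀ y' ∈ Y0Qn r n, (n : ℤ) ∣ GSpB r y y'}
  zero_mem' := by
    intro y' _
    simp [GSpB]
  add_mem' := by
    intro a b ha hb y' hy'
    rw [GSpB_add_left]
    exact dvd_add (ha y' hy') (hb y' hy')
  neg_mem' := by
    intro a ha y' hy'
    rw [GSpB_neg_left]
    exact dvd_neg.mpr (ha y' hy')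

lemma mem_Y0Qn_iff (r m : ℕ) (hm : 1 ≤ m) (y : (Fin r → ℤ) × ℤ) :
    y ∈ Y0Qn r (2 * m) ↔ y.2 = 0 ∧ ∀ i, (m : ℤ) ∣ y.1 i := by
  constructor
  · rintro ⟨h2, h⟩
    refine ⟨h2, fun i => ?_⟩
    have := h (Pi.single i 1, 0) rfl
    simp only [GSpB, Pi.single_apply, mul_ite, mul_one, mul_zero,
      Finset.sum_ite_eq', Finset.mem_univ, if_true, h2, zero_mul, add_zero] at this
    have h2m : ((2 * m : ℕ) : ℤ) = 2 * (m : ℤ) := by push_cast; ring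
    rw [h2m] at this
    have h1 : (2 : ℤ) * m ∣ 2 * (-(y.1 i)) := by
      have e : (2 : ℤ) * -(y.1 i) = -2 * y.1 i := by ring
      rw [e]; exact this
    exact dvd_neg.mp ((mul_dvd_mul_iff_left (two_ne_zero (α := ℤ))).mp h1)
  · rintro ⟨h2, h⟩
    refine ⟨h2, fun y' hy' => ?_⟩
    simp only [GSpB, h2, hy', mul_zero, zero_mul, add_zero]
    have h2m : ((2 * m : ℕ) : ℤ) = 2 * (m : ℤ) := by push_cast; ring
    rw [h2m, neg_mul, dvd_neg, Finset.mul_sum]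
    refine Finset.dvd_sum fun i _ => ?_
    obtain ⟨c, hc⟩ := h i
    exact ⟨c * y'.1 i, by rw [hc]; ring⟩

lemma mem_Yfc_iff (r m : ℕ) (hr : 1 ≤ r) (hm : 1 ≤ m) (y : (Fin r → ℤ) × ℤ) :
    y ∈ Yfc r (2 * m) ↔ (2 : ℤ) ∣ y.2 := by
  have h2m : ((2 * m : ℕ) : ℤ) = 2 * (m : ℤ) := by push_cast; ring
  constructor
  · intro h
    set i0 : Fin r := ⟨0, hr⟩
    have hmem : ((Pi.single i0 (m : ℤ), 0) : (Fin r → ℤ) × ℤ) ∈ Y0Qn r (2 * m) := by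
      rw [mem_Y0Qn_iff r m hm]
      refine ⟨rfl, fun i => ?_⟩
      simp only [Pi.single_apply]
      split <;> simp
    have := h _ hmem
    simp only [GSpB, Pi.single_apply, mul_ite, mul_zero,
      Finset.sum_ite_eq', Finset.mem_univ, if_true, zero_mul, add_zero] at this
    rw [h2m] at this
    have key : (2 : ℤ) * m ∣ (-2 * y.1 i0 + y.2) * m := by
      have e : (-2 * y.1 i0 + y.2) * (m : ℤ) = -2 * (y.1 i0 * m) + y.2 * m := by ring
      rw [e]; exact this
    have hm0 : (m : ℤ) ≠ 0 := by exact_mod_cast Nat.one_le_iff_ne_zero.mp hm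
    have h2 : (2 : ℤ) ∣ -2 * y.1 i0 + y.2 := (mul_dvd_mul_iff_right hm0).mp key
    have h3 := dvd_add h2 (dvd_mul_right (2 : ℤ) (y.1 i0))
    have e2 : -2 * y.1 i0 + y.2 + 2 * y.1 i0 = y.2 := by ring
    rwa [e2] at h3
  · intro h y' hy'
    rw [mem_Y0Qn_iff r m hm] at hy'
    obtain ⟨hy'2, hy'1⟩ := hy'
    obtain ⟨d, hd⟩ := h
    simp only [GSpB, hy'2, mul_zero, add_zero]
    have hS1 : (m : ℤ) ∣ ∑ i, y.1 i * y'.1 i :=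
      Finset.dvd_sum fun i _ => (hy'1 i).mul_left _
    have hS2 : (m : ℤ) ∣ ∑ i, y'.1 i := Finset.dvd_sum fun i _ => hy'1 i
    obtain ⟨a, ha⟩ := hS1
    obtain ⟨b, hb⟩ := hS2
    rw [h2m]
    exact ⟨-a + d * b, by rw [ha, hb, hd]; ring⟩

/-- For `n = 2m` even and `r` odd: `Y^𝔠 = {y ∈ Y : 2 ∣ y_0}`, so
`[Y : Y^𝔠] = 2`; moreover `Y_0 + Y_{Q,n} ⊆ Y^𝔠` and the subgroup
`𝒳^𝔠 = Y^𝔠/(Y_0 + Y_{Q,n})` has index 2 in `𝒳^Γ = Y/(Y_0 + Y_{Q,n})`, the nontrivial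
coset being represented by the class of `e_0`. -/
theorem stmt7 (r m : ℕ) (hr : 1 ≤ r) (hrodd : Odd r) (hm : 1 ≤ m) :
    ((Yfc r (2 * m) : AddSubgroup ((Fin r → ℤ) × ℤ)) : Set ((Fin r → ℤ) × ℤ))
        = {y | (2 : ℤ) ∣ y.2} ∧
    (Yfc r (2 * m)).index = 2 ∧
    Y0 r ⊔ YQn r (2 * m) ≤ Yfc r (2 * m) ∧
    ((Yfc r (2 * m)).map (QuotientAddGroup.mk' (Y0 r ⊔ YQn r (2 * m)))).index = 2 ∧
    QuotientAddGroup.mk' (Y0 r ⊔ YQn r (2 * m)) (((0 : Fin r → ℤ), 1) : (Fin r → ℤ) × ℤ)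
      ∉ (Yfc r (2 * m)).map (QuotientAddGroup.mk' (Y0 r ⊔ YQn r (2 * m))) := by
  set N := Y0 r ⊔ YQn r (2 * m) with hN
  have hset : ((Yfc r (2 * m) : AddSubgroup ((Fin r → ℤ) × ℤ)) : Set ((Fin r → ℤ) × ℤ))
      = {y | (2 : ℤ) ∣ y.2} := by
    ext y; exact mem_Yfc_iff r m hr hm y
  have hle : N ≤ Yfc r (2 * m) := by
    refine sup_le ?_ ?_
    · intro y hy
      refine (mem_Yfc_iff r m hr hm y).mpr ?_
      rw [show y.2 = 0 from hy]
      exact dvd_zero _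
    · intro y hy y' _
      exact hy y'
  -- the index of Yfc in Y
  have hidx : (Yfc r (2 * m)).index = 2 := by
    set φ : ((Fin r → ℤ) × ℤ) →+ ZMod 2 :=
      (Int.castAddHom (ZMod 2)).comp (AddMonoidHom.snd (Fin r → ℤ) ℤ) with hφdef
    have hker : Yfc r (2 * m) = φ.ker := by
      ext y
      rw [mem_Yfc_iff r m hr hm y, AddMonoidHom.mem_ker]
      simp only [hφdef, AddMonoidHom.coe_comp, Function.comp_apply,
        AddMonoidHom.coe_snd, Int.coe_castAddHom]
      exact (ZMod.intCast_zmod_eq_zero_iff_dvd y.2 2).symm.trans (by norm_cast)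
    have hsurj : Function.Surjective φ := by
      intro z
      obtain ⟨k, hk⟩ := ZMod.intCast_surjective z
      exact ⟨(0, k), hk⟩
    rw [hker, AddSubgroup.index_ker]
    rw [AddMonoidHom.range_eq_top.mpr hsurj]
    rw [Nat.card_congr AddSubgroup.topEquiv.toEquiv, Nat.card_zmod]
  have hmapidx : ((Yfc r (2 * m)).map (QuotientAddGroup.mk' N)).index = 2 := by
    rw [AddSubgroup.index_map_eq _ (QuotientAddGroup.mk'_surjective N)
      (by rw [QuotientAddGroup.ker_mk']; exact hle)]
    exact hidx
  refine ⟨hset, hidx, hle, hmapidx, ?_⟩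
  rintro ⟨y, hy, heq⟩
  rw [QuotientAddGroup.mk'_eq_mk'] at heq
  obtain ⟨z, hz, hyz⟩ := heq
  have hmem : (((0 : Fin r → ℤ), 1) : (Fin r → ℤ) × ℤ) ∈ Yfc r (2 * m) :=
    hyz ▸ AddSubgroup.add_mem _ hy (hle hz)
  have := (mem_Yfc_iff r m hr hm _).mp hmem
  norm_num at this
end

section
/- With the notation of the context, assume n is odd. Then Y_{0,Q,n} = Y_0 ∩ Y_{Q,n} = nY_0. (This is the lattice criterion showing that for odd n the n-fold cover of GSp_{2r} of similitudes-splitting type together with its restriction to Sp_{2r} form an isotypic pair.) -/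
/-- For `n` odd, `Y_{0,Q,n} = Y_0 ∩ Y_{Q,n} = nY_0`
(the lattice criterion that `(GSp_{2r}, Sp_{2r})` covers form an isotypic pair). -/
theorem stmt8 (r n : ℕ) (hr : 1 ≤ r) (hodd : Odd n) :
    ((Y0Qn r n : AddSubgroup ((Fin r → ℤ) × ℤ)) : Set ((Fin r → ℤ) × ℤ))
        = {y | y.2 = 0 ∧ ∀ i, (n : ℤ) ∣ y.1 i} ∧
    ((Y0 r ⊓ YQn r n : AddSubgroup ((Fin r → ℤ) × ℤ)) : Set ((Fin r → ℤ) × ℤ))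
        = {y | y.2 = 0 ∧ ∀ i, (n : ℤ) ∣ y.1 i} := by
  have hcop : IsCoprime (n : ℤ) 2 := by
    rw [Int.isCoprime_iff_gcd_eq_one]
    have := Nat.Coprime.isCoprime (hodd.coprime_two_right)
    rwa [Int.isCoprime_iff_gcd_eq_one] at this
  have key : ∀ (y : (Fin r → ℤ) × ℤ), y.2 = 0 →
      (∀ j, (n : ℤ) ∣ GSpB r y (Pi.single j 1, 0)) → ∀ j, (n : ℤ) ∣ y.1 j := by
    intro y hy2 h j
    have := h j
    have hB : GSpB r y (Pi.single j 1, 0) = y.1 j * (-2) := by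
      simp [GSpB, hy2, Pi.single_apply, mul_ite, Finset.sum_ite_eq']
      ring
    rw [hB] at this
    have := hcop.neg_right.dvd_of_dvd_mul_right this
    exact this
  have easy : ∀ (y : (Fin r → ℤ) × ℤ), (∀ i, (n : ℤ) ∣ y.1 i) → y.2 = 0 →
      ∀ y', (n : ℤ) ∣ GSpB r y y' := by
    intro y hy hy2 y'
    simp only [GSpB, hy2, zero_mul, add_zero]
    refine dvd_add (Dvd.dvd.mul_left ?_ _) (Dvd.dvd.mul_right ?_ _)
    · exact Finset.dvd_sum fun i _ => (hy i).mul_right _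
    · exact Finset.dvd_sum fun i _ => hy i
  constructor
  · ext y
    constructor
    · rintro ⟨hy2, h⟩
      exact ⟨hy2, key y hy2 (fun j => h _ rfl) ⟩
    · rintro ⟨hy2, h⟩
      exact ⟨hy2, fun y' _ => easy y h hy2 y'⟩
  · ext y
    constructor
    · rintro ⟨hy2, h⟩
      exact ⟨hy2, key y hy2 (fun j => h _)⟩
    · rintro ⟨hy2, h⟩
      exact ⟨hy2, easy y h hy2⟩
end

section
/- With the notation of the context, set Y_c := ℤe_c. Then Y_c ∩ Y_{Q,n} = ℤ·(n_{(r)}e_c), and the lattice Y_{c,Q,n} := { y ∈ Y_c : B(y, y') ∈ nℤ for all y' ∈ Y_c } equals ℤ·(n_{(2r)}e_c). These two subgroups of Y_c coincide if and only if the 2-adic valuation of n is at most the 2-adic valuation of r. -/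
/-- The central cocharacter `e_c = 2e_0 + e_1 + ⋯ + e_r`. -/
def ecv (r : ℕ) : (Fin r → ℤ) × ℤ := (fun _ => 1, 2)

/-- The lattice `Y_{c,Q,n} = {y ∈ Y_c : B(y, y') ∈ nℤ for all y' ∈ Y_c}`, where
`Y_c = ℤe_c`. -/
def YcQn (r n : ℕ) : AddSubgroup ((Fin r → ℤ) × ℤ) where
  carrier := {y | y ∈ AddSubgroup.zmultiples (ecv r) ∧
      ∀ y' ∈ AddSubgroup.zmultiples (ecv r), (n : ℤ) ∣ GSpB r y y'}
  zero_mem' := ⟨zero_mem _, fun y' _ => by simp [GSpB]⟩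
  add_mem' := by
    rintro a b ⟨haz, ha⟩ ⟨hbz, hb⟩
    refine ⟨add_mem haz hbz, fun y' hy' => ?_⟩
    rw [GSpB_add_left]
    exact dvd_add (ha y' hy') (hb y' hy')
  neg_mem' := by
    rintro a ⟨haz, ha⟩
    refine ⟨neg_mem haz, fun y' hy' => ?_⟩
    rw [GSpB_neg_left]
    exact dvd_neg.mpr (ha y' hy')

lemma GSpB_smul_ec (r : ℕ) (k : ℤ) (y : (Fin r → ℤ) × ℤ) :
    GSpB r (k • ecv r) y = k * r * y.2 := by
  simp only [GSpB, ecv, Prod.smul_fst, Prod.smul_snd, Pi.smul_apply, smul_eq_mul, mul_one,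
    ← Finset.mul_sum, Finset.sum_const, Finset.card_univ, Fintype.card_fin, nsmul_eq_mul]
  ring

lemma smul_ec_inj (r : ℕ) {k k' : ℤ} (h : k • ecv r = k' • ecv r) : k = k' := by
  have := congrArg Prod.snd h
  simp only [ecv, Prod.smul_snd, smul_eq_mul] at this
  linarith

lemma mem_zmult_smul_ec (r : ℕ) (c k : ℤ) :
    k • ecv r ∈ AddSubgroup.zmultiples (c • ecv r) ↔ c ∣ k := by
  constructor
  · rintro ⟨j, hj⟩
    simp only [smul_smul] at hj
    exact ⟨j, (smul_ec_inj r hj).symm.trans (mul_comm j c)⟩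
  · rintro ⟨j, rfl⟩
    exact ⟨j, by show j • c • ecv r = _; rw [smul_smul, mul_comm]⟩

lemma dvd_key (n m : ℕ) (hn : 0 < n) (k : ℤ) :
    (n : ℤ) ∣ k * m ↔ ((n / Nat.gcd n m : ℕ) : ℤ) ∣ k := by
  set g := Nat.gcd n m with hg
  have hgpos : 0 < g := Nat.gcd_pos_of_pos_left m hn
  have h1 : (n : ℤ) = (g : ℤ) * ((n / g : ℕ) : ℤ) := by
    rw [← Nat.cast_mul, Nat.mul_div_cancel' (Nat.gcd_dvd_left n m)]
  have h2 : (m : ℤ) = (g : ℤ) * ((m / g : ℕ) : ℤ) := by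
    rw [← Nat.cast_mul, Nat.mul_div_cancel' (Nat.gcd_dvd_right n m)]
  have hcop : IsCoprime ((n / g : ℕ) : ℤ) ((m / g : ℕ) : ℤ) :=
    (Nat.coprime_div_gcd_div_gcd hgpos).isCoprime
  rw [h1, h2]
  have : k * ((g : ℤ) * ((m / g : ℕ) : ℤ)) = (g : ℤ) * (k * ((m / g : ℕ) : ℤ)) := by ring
  rw [this, mul_dvd_mul_iff_left (by exact_mod_cast hgpos.ne' : (g : ℤ) ≠ 0)]
  constructor
  · exact hcop.dvd_of_dvd_mul_right
  · exact fun h => h.mul_right _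

lemma gcd_eq_iff_v2 (n r : ℕ) (hn : 0 < n) (hr : 0 < r) :
    Nat.gcd n r = Nat.gcd n (2 * r) ↔ padicValNat 2 n ≤ padicValNat 2 r := by
  have hn' : n ≠ 0 := hn.ne'
  have hr' : r ≠ 0 := hr.ne'
  have h2r : 2 * r ≠ 0 := by positivity
  have hga : Nat.gcd n r ≠ 0 := Nat.gcd_ne_zero_left hn'
  have hgb : Nat.gcd n (2 * r) ≠ 0 := Nat.gcd_ne_zero_left hn'
  have key : Nat.gcd n r = Nat.gcd n (2 * r) ↔
      (Nat.gcd n r).factorization = (Nat.gcd n (2 * r)).factorization := by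
    constructor
    · exact congrArg _
    · exact fun h => Nat.factorization_inj hga hgb h
  rw [key, Nat.factorization_gcd hn' hr', Nat.factorization_gcd hn' h2r,
    Nat.factorization_mul (by norm_num) hr', Nat.Prime.factorization Nat.prime_two]
  rw [DFunLike.ext_iff]
  have hv2n : padicValNat 2 n = n.factorization 2 :=
    (Nat.factorization_def n Nat.prime_two).symm
  have hv2r : padicValNat 2 r = r.factorization 2 :=
    (Nat.factorization_def r Nat.prime_two).symm
  rw [hv2n, hv2r]
  constructor
  · intro h
    have := h 2
    simp only [Finsupp.inf_apply, Finsupp.add_apply, Finsupp.single_eq_same] at this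
    omega
  · intro h p
    simp only [Finsupp.inf_apply, Finsupp.add_apply, Finsupp.single_apply]
    by_cases hp : 2 = p
    · subst hp; simp only [if_pos rfl]; omega
    · simp only [if_neg hp]; omega

/-- With `Y_c = ℤe_c`: `Y_c ∩ Y_{Q,n} = ℤ·(n_{(r)}e_c)` and
`Y_{c,Q,n} = ℤ·(n_{(2r)}e_c)`, and these two subgroups of `Y_c` coincide if and only if
the 2-adic valuation of `n` is at most the 2-adic valuation of `r`. -/
theorem stmt9 (r n : ℕ) (hr : 1 ≤ r) (hn : 1 ≤ n) :
    AddSubgroup.zmultiples (ecv r) ⊓ YQn r n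
        = AddSubgroup.zmultiples (((n / Nat.gcd n r : ℕ) : ℤ) • ecv r) ∧
    YcQn r n = AddSubgroup.zmultiples (((n / Nat.gcd n (2 * r) : ℕ) : ℤ) • ecv r) ∧
    (AddSubgroup.zmultiples (ecv r) ⊓ YQn r n = YcQn r n
      ↔ padicValNat 2 n ≤ padicValNat 2 r) := by
  have hn0 : 0 < n := hn
  have hr0 : 0 < r := hr
  set a : ℕ := n / Nat.gcd n r with ha
  set b : ℕ := n / Nat.gcd n (2 * r) with hb
  have part1 : AddSubgroup.zmultiples (ecv r) ⊓ YQn r n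
      = AddSubgroup.zmultiples ((a : ℤ) • ecv r) := by
    ext x
    rw [AddSubgroup.mem_inf]
    constructor
    · rintro ⟨⟨k, rfl⟩, hQ⟩
      have h : ∀ y', (n : ℤ) ∣ GSpB r (k • ecv r) y' := hQ
      have h1 := h ((0 : Fin r → ℤ), 1)
      rw [GSpB_smul_ec] at h1
      simp only [mul_one] at h1
      exact (mem_zmult_smul_ec r _ k).mpr ((dvd_key n r hn0 k).mp h1)
    · rintro ⟨j, rfl⟩
      have hNr : (n : ℤ) ∣ (a : ℤ) * r := (dvd_key n r hn0 _).mpr dvd_rfl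
      refine ⟨⟨j * (a : ℤ), (smul_smul j (a : ℤ) (ecv r)).symm⟩, ?_⟩
      intro y'
      have heq : GSpB r ((fun x => x • (a : ℤ) • ecv r) j) y'
          = (j * y'.2) * ((a : ℤ) * r) := by
        show GSpB r (j • (a : ℤ) • ecv r) y' = _
        rw [smul_smul, GSpB_smul_ec]; ring
      rw [heq]
      exact hNr.mul_left _
  have part2 : YcQn r n = AddSubgroup.zmultiples ((b : ℤ) • ecv r) := by
    ext x
    constructor
    · rintro ⟨⟨k, rfl⟩, h⟩
      have h1 := h (ecv r) ⟨1, one_smul _ _⟩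
      have heq : GSpB r (k • ecv r) (ecv r) = k * ((2 * r : ℕ) : ℤ) := by
        rw [GSpB_smul_ec]
        show k * r * 2 = _
        push_cast; ring
      rw [heq] at h1
      exact (mem_zmult_smul_ec r _ k).mpr ((dvd_key n (2 * r) hn0 k).mp h1)
    · rintro ⟨j, rfl⟩
      have hNr : (n : ℤ) ∣ (b : ℤ) * ((2 * r : ℕ) : ℤ) := (dvd_key n (2 * r) hn0 _).mpr dvd_rfl
      refine ⟨⟨j * (b : ℤ), (smul_smul j (b : ℤ) (ecv r)).symm⟩, ?_⟩
      rintro y' ⟨m, rfl⟩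
      have heq : GSpB r ((fun x => x • (b : ℤ) • ecv r) j) ((fun x => x • ecv r) m)
          = (j * m) * ((b : ℤ) * ((2 * r : ℕ) : ℤ)) := by
        show GSpB r (j • (b : ℤ) • ecv r) (m • ecv r) = _
        rw [smul_smul, GSpB_smul_ec]
        show j * (b : ℤ) * r * (m * 2) = _
        push_cast; ring
      rw [heq]
      exact hNr.mul_left _
  refine ⟨part1, part2, ?_⟩
  rw [part1, part2]
  have hab : a = b ↔ Nat.gcd n r = Nat.gcd n (2 * r) := by
    constructor
    · intro h
      have e1 : Nat.gcd n r = n / a := (Nat.div_div_self (Nat.gcd_dvd_left n r) hn0.ne').symm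
      have e2 : Nat.gcd n (2 * r) = n / b :=
        (Nat.div_div_self (Nat.gcd_dvd_left n (2 * r)) hn0.ne').symm
      rw [e1, e2, h]
    · intro h; rw [ha, hb, h]
  constructor
  · intro hsub
    have h1 : (a : ℤ) • ecv r ∈ AddSubgroup.zmultiples ((b : ℤ) • ecv r) := by
      rw [← hsub]
      exact ⟨1, one_smul _ _⟩
    have h2 : (b : ℤ) • ecv r ∈ AddSubgroup.zmultiples ((a : ℤ) • ecv r) := by
      rw [hsub]
      exact ⟨1, one_smul _ _⟩
    have d1 : (b : ℤ) ∣ (a : ℤ) := (mem_zmult_smul_ec r _ _).mp h1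
    have d2 : (a : ℤ) ∣ (b : ℤ) := (mem_zmult_smul_ec r _ _).mp h2
    have : a = b := Nat.dvd_antisymm (Int.natCast_dvd_natCast.mp d2) (Int.natCast_dvd_natCast.mp d1)
    exact (gcd_eq_iff_v2 n r hn0 hr0).mp (hab.mp this)
  · intro h
    have : a = b := hab.mpr ((gcd_eq_iff_v2 n r hn0 hr0).mpr h)
    rw [this]
end

section
/- Let r ≥ 2 and let Q : ℤ^{r+1} → ℤ be a quadratic form with associated symmetric bilinear form B_Q(x, y) = Q(x + y) − Q(x) − Q(y), where ℤ^{r+1} has basis e_1, …, e_r, e_0. Assume Q is invariant under every permutation of e_1, …, e_r fixing e_0, and under the linear automorphism σ determined by e_r ↦ e_0 − e_r, e_i ↦ e_i for 1 ≤ i ≤ r − 1, and e_0 ↦ e_0. Then Q(e_1) = Q(e_2) = ⋯ = Q(e_r); B_Q(e_i, e_0) = Q(e_0) for every 1 ≤ i ≤ r; and Q(e_0) = 2·B_Q(e_i, e_j) for all 1 ≤ i ≠ j ≤ r. -/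
/-- Let `r ≥ 2` and let `Q` be a quadratic form on `ℤ^{r+1}`
(realized as `(Fin r → ℤ) × ℤ`, with `e_i = (Pi.single i 1, 0)` and `e_0 = (0,1)`),
with bilinear form `B_Q(x,y) = Q(x+y) - Q x - Q y`.  Assume `Q` is invariant under every
permutation of `e_1, …, e_r` fixing `e_0`, and under the automorphism `σ` determined by
`e_r ↦ e_0 - e_r`, `e_i ↦ e_i` (`i < r`), `e_0 ↦ e_0`.  Then `Q(e_1) = ⋯ = Q(e_r)`,
`B_Q(e_i, e_0) = Q(e_0)` for all `i`, and `Q(e_0) = 2·B_Q(e_i, e_j)` for all `i ≠ j`. -/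
theorem stmt11 (r : ℕ) (hr : 2 ≤ r)
    (Q : QuadraticForm ℤ ((Fin r → ℤ) × ℤ))
    (hperm : ∀ (σ : Equiv.Perm (Fin r)) (v : (Fin r → ℤ) × ℤ), Q (v.1 ∘ σ, v.2) = Q v)
    (hσ : ∀ v : (Fin r → ℤ) × ℤ,
        Q (Function.update v.1 ⟨r - 1, by omega⟩ (-(v.1 ⟨r - 1, by omega⟩)),
            v.2 + v.1 ⟨r - 1, by omega⟩) = Q v) :
    (∀ i j : Fin r, Q (Pi.single i 1, 0) = Q (Pi.single j 1, 0)) ∧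
    (∀ i : Fin r,
        Q ((Pi.single i 1, 0) + ((0, 1) : (Fin r → ℤ) × ℤ))
          - Q (Pi.single i 1, 0) - Q ((0, 1) : (Fin r → ℤ) × ℤ)
          = Q ((0, 1) : (Fin r → ℤ) × ℤ)) ∧
    (∀ i j : Fin r, i ≠ j →
        Q ((0, 1) : (Fin r → ℤ) × ℤ)
          = 2 * (Q ((Pi.single i 1, 0) + (Pi.single j 1, 0))
              - Q (Pi.single i 1, 0) - Q (Pi.single j 1, 0))) := by
  classical
  set k : Fin r := ⟨r - 1, by omega⟩ with hkdef
  set i₀ : Fin r := ⟨0, by omega⟩ with hi₀def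
  have hki₀ : k ≠ i₀ := by
    simp only [hkdef, hi₀def, Ne, Fin.mk.injEq]
    omega
  set e : Fin r → (Fin r → ℤ) × ℤ := fun i => (Pi.single i 1, 0) with he
  set e0 : (Fin r → ℤ) × ℤ := (0, 1) with he0
  have hcomp : ∀ i j : Fin r, (Pi.single j 1 : Fin r → ℤ) ∘ (Equiv.swap i j) = Pi.single i 1 := by
    intro i j
    funext x
    simp [Function.comp, Pi.single_apply, Equiv.swap_apply_def]
    split_ifs <;> simp_all
  -- part 1
  have h1 : ∀ i j : Fin r, Q (e i) = Q (e j) := by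
    intro i j
    have := hperm (Equiv.swap i j) (Pi.single j 1, 0)
    rw [show ((Pi.single j 1 : Fin r → ℤ), (0:ℤ)).1 ∘ (Equiv.swap i j) = Pi.single i 1 from hcomp i j] at this
    exact this
  -- Q (e i + e0) = Q (e k + e0)
  have h2 : ∀ i : Fin r, Q (e i + e0) = Q (e k + e0) := by
    intro i
    have := hperm (Equiv.swap i k) (Pi.single k 1, 1)
    rw [show ((Pi.single k 1 : Fin r → ℤ), (1:ℤ)).1 ∘ (Equiv.swap i k) = Pi.single i 1 from hcomp i k] at this
    have hv : ∀ m : Fin r, ((Pi.single m 1 : Fin r → ℤ), (1:ℤ)) = e m + e0 := by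
      intro m; simp [he, he0, Prod.ext_iff]
    rw [hv i, hv k] at this
    exact this
  -- σ applied to e k
  have h3 : Q (e0 - e k) = Q (e k) := by
    have := hσ (Pi.single k 1, 0)
    have hu : Function.update (Pi.single k 1 : Fin r → ℤ) k
        (-((Pi.single k 1 : Fin r → ℤ) k)) = -Pi.single k 1 := by
      funext x
      by_cases hx : x = k <;> simp [Function.update, hx, Pi.single_apply]
    simp only [hu] at this
    simp only [Pi.single_eq_same, zero_add] at this
    rw [show ((-Pi.single k 1 : Fin r → ℤ), (1:ℤ)) = e0 - e k by
      simp [he, he0, Prod.ext_iff]] at this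
    exact this
  have hpol0 : QuadraticMap.polar Q (e k) e0 = Q e0 := by
    have hexp : Q (e0 - e k) = Q e0 + Q (e k) - QuadraticMap.polar Q (e k) e0 := by
      rw [sub_eq_add_neg,
        show Q (e0 + -(e k)) = Q e0 + Q (-(e k)) + QuadraticMap.polar Q e0 (-(e k)) by
          simp [QuadraticMap.polar]; try ring,
        QuadraticMap.map_neg, QuadraticMap.polar_neg_right, QuadraticMap.polar_comm]
      ring
    rw [hexp] at h3
    linarith
  have hpoli : ∀ i : Fin r, QuadraticMap.polar Q (e i) e0 = Q e0 := by
    intro i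
    have hdef : QuadraticMap.polar Q (e i) e0 = Q (e i + e0) - Q (e i) - Q e0 := by
      simp [QuadraticMap.polar]
    rw [hdef, h2 i, h1 i k]
    have hk' : Q (e k + e0) = Q (e k) + Q e0 + QuadraticMap.polar Q (e k) e0 := by
      simp [QuadraticMap.polar]; try ring
    rw [hk', hpol0]; ring
  refine ⟨h1, ?_, ?_⟩
  · intro i
    have := hpoli i
    simp only [QuadraticMap.polar] at this
    exact this
  -- part 3
  intro i j hij
  have hpair : Q (e i₀ + e k) = Q (e i + e j) := by
    obtain ⟨π, hπ1, hπ2⟩ : ∃ π : Equiv.Perm (Fin r), π.symm i = i₀ ∧ π.symm j = k := by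
      set c := Equiv.swap i₀ i with hc
      set j' := c k with hj'
      have hj'i : j' ≠ i := by
        simp only [hj', hc]
        intro h
        exact hki₀ ((Equiv.swap i₀ i).injective (by simp [h]))
      refine ⟨c.trans (Equiv.swap j' j), ?_, ?_⟩
      · rw [Equiv.symm_apply_eq]
        symm
        show Equiv.swap j' j (c i₀) = i
        rw [hc, Equiv.swap_apply_left, Equiv.swap_apply_of_ne_of_ne (Ne.symm hj'i) hij]
      · rw [Equiv.symm_apply_eq]
        symm
        show Equiv.swap j' j (c k) = j
        rw [← hj', Equiv.swap_apply_left]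
    have := hperm π (Pi.single i 1 + Pi.single j 1, 0)
    have hc2 : ((Pi.single i 1 + Pi.single j 1 : Fin r → ℤ)) ∘ π
        = Pi.single (π.symm i) 1 + Pi.single (π.symm j) 1 := by
      funext x
      simp [Function.comp, Pi.single_apply, Equiv.eq_symm_apply, eq_comm]
    rw [show ((Pi.single i 1 + Pi.single j 1 : Fin r → ℤ), (0:ℤ)).1 ∘ π
        = Pi.single (π.symm i) 1 + Pi.single (π.symm j) 1 from hc2, hπ1, hπ2] at this
    rw [show ((Pi.single i₀ 1 + Pi.single k 1 : Fin r → ℤ), (0:ℤ)) = e i₀ + e k by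
      simp [he, Prod.ext_iff]] at this
    rw [show ((Pi.single i 1 + Pi.single j 1 : Fin r → ℤ), (0:ℤ)) = e i + e j by
      simp [he, Prod.ext_iff]] at this
    exact this
  have h4 : Q (e i₀ - e k + e0) = Q (e i₀ + e k) := by
    have := hσ (Pi.single i₀ 1 + Pi.single k 1, 0)
    have hval : (Pi.single i₀ 1 + Pi.single k 1 : Fin r → ℤ) k = 1 := by
      simp [Pi.single_apply, hki₀]
    have hu : Function.update (Pi.single i₀ 1 + Pi.single k 1 : Fin r → ℤ) k (-1)
        = Pi.single i₀ 1 - Pi.single k 1 := by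
      funext x
      by_cases hx : x = k <;> simp [Function.update, hx, Pi.single_apply, hki₀]
    simp only [hval, zero_add] at this
    rw [hu] at this
    rw [show ((Pi.single i₀ 1 - Pi.single k 1 : Fin r → ℤ), (1:ℤ)) = e i₀ - e k + e0 by
      simp [he, he0, Prod.ext_iff]] at this
    rw [show ((Pi.single i₀ 1 + Pi.single k 1 : Fin r → ℤ), (0:ℤ)) = e i₀ + e k by
      simp [he, Prod.ext_iff]] at this
    exact this
  have hexp1 : Q (e i₀ - e k + e0) =
      Q (e i₀ + e0) + Q (e k) - QuadraticMap.polar Q (e i₀) (e k)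
        - QuadraticMap.polar Q (e0) (e k) := by
    rw [show e i₀ - e k + e0 = (e i₀ + e0) + -(e k) by abel]
    rw [show Q ((e i₀ + e0) + -(e k)) = Q (e i₀ + e0) + Q (-(e k))
        + QuadraticMap.polar Q (e i₀ + e0) (-(e k)) by simp [QuadraticMap.polar]; try ring]
    rw [QuadraticMap.map_neg, QuadraticMap.polar_neg_right, QuadraticMap.polar_add_left]
    ring
  have hexp2 : Q (e i₀ + e k) = Q (e i₀) + Q (e k) + QuadraticMap.polar Q (e i₀) (e k) := by
    simp [QuadraticMap.polar]; try ring
  have hexp3 : Q (e i₀ + e0) = Q (e i₀) + Q e0 + Q e0 := by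
    have hh : Q (e i₀ + e0) = Q (e i₀) + Q e0 + QuadraticMap.polar Q (e i₀) e0 := by
      simp [QuadraticMap.polar]; try ring
    rw [hh, hpoli i₀]
  have h0k : QuadraticMap.polar Q e0 (e k) = Q e0 := by
    rw [QuadraticMap.polar_comm]; exact hpol0
  have key : Q e0 = 2 * QuadraticMap.polar Q (e i₀) (e k) := by
    rw [hexp1, hexp2, hexp3, h0k] at h4
    linarith
  have hfin : Q (e i + e j) - Q (e i) - Q (e j) = QuadraticMap.polar Q (e i₀) (e k) := by
    rw [← hpair, h1 i i₀, h1 j k]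
    simp [QuadraticMap.polar]
  rw [show ((Pi.single i 1 : Fin r → ℤ), (0:ℤ)) = e i from rfl,
      show ((Pi.single j 1 : Fin r → ℤ), (0:ℤ)) = e j from rfl]
  rw [show Q (e i + e j) - Q (e i) - Q (e j) = QuadraticMap.polar Q (e i₀) (e k) from hfin]
  exact key
end

section
/- With the notation of the context, Y_0 = { y ∈ Y : y_1 + ⋯ + y_r + 2y_0 = 0 }, and Y_0 ∩ Y_{Q,n} equals the ℤ-span of the set { n(e_i − e_{i+1}) : 1 ≤ i ≤ r − 1 } ∪ { n_{(2)}(2e_r − e_0) }. In particular, since Q(e_i − e_{i+1}) = 1 and Q(2e_r − e_0) = 2 (so that n_{α_i} = n for i < r and n_{α_r} = n_{(2)}), one has Y_0 ∩ Y_{Q,n} = Y_{Q,n}^{sc}, i.e. every such cover of GSpin_{2r+1} is saturated. -/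
/-- The symmetric bilinear form on `Y = ℤ^{r+1}` (realized as `(Fin r → ℤ) × ℤ`, with
`e_i` the standard vectors of the first factor and `e_0 = (0,1)`) attached to an `n`-fold
Brylinski–Deligne cover of `GSpin_{2r+1}`: with `𝐪 = 2𝐩 - 1`, `B(e_i, e_i) = 2𝐩`,
`B(e_i, e_j) = 𝐪` for `i ≠ j`, `B(e_i, e_0) = 2𝐪`, `B(e_0, e_0) = 4𝐪`. -/
def BSpin (r : ℕ) (p : ℤ) (x y : (Fin r → ℤ) × ℤ) : ℤ :=
  2 * p * (∑ i, x.1 i * y.1 i)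
    + (2 * p - 1) * ((∑ i, x.1 i) * (∑ i, y.1 i) - ∑ i, x.1 i * y.1 i)
    + 2 * (2 * p - 1) * ((∑ i, x.1 i) * y.2 + x.2 * (∑ i, y.1 i))
    + 4 * (2 * p - 1) * (x.2 * y.2)

lemma BSpin_add_left (r : ℕ) (p : ℤ) (a b y : (Fin r → ℤ) × ℤ) :
    BSpin r p (a + b) y = BSpin r p a y + BSpin r p b y := by
  simp only [BSpin, Prod.fst_add, Prod.snd_add, Pi.add_apply, add_mul,
    Finset.sum_add_distrib]
  ring

lemma BSpin_neg_left (r : ℕ) (p : ℤ) (a y : (Fin r → ℤ) × ℤ) :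
    BSpin r p (-a) y = -BSpin r p a y := by
  simp only [BSpin, Prod.fst_neg, Prod.snd_neg, Pi.neg_apply, neg_mul,
    Finset.sum_neg_distrib]
  ring

/-- The lattice `Y_{Q,n} = {y ∈ Y : B(y, y') ∈ nℤ for all y' ∈ Y}`. -/
def YQnSpin (r n : ℕ) (p : ℤ) : AddSubgroup ((Fin r → ℤ) × ℤ) where
  carrier := {y | ∀ y', (n : ℤ) ∣ BSpin r p y y'}
  zero_mem' := by
    intro y'
    simp [BSpin]
  add_mem' := by
    intro a b ha hb y'
    rw [BSpin_add_left]
    exact dvd_add (ha y') (hb y')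
  neg_mem' := by
    intro a ha y'
    rw [BSpin_neg_left]
    exact dvd_neg.mpr (ha y')

/-- The simple coroot `α_i^∨ = e_i - e_{i+1}` of `GSpin_{2r+1}` for `1 ≤ i ≤ r - 1`. -/
def alphaSpin (r : ℕ) (i : Fin (r - 1)) : (Fin r → ℤ) × ℤ :=
  (Pi.single (⟨i.1, by have := i.2; omega⟩ : Fin r) 1
    - Pi.single (⟨i.1 + 1, by have := i.2; omega⟩ : Fin r) 1, 0)

/-- The simple coroot `α_r^∨ = 2e_r - e_0` of `GSpin_{2r+1}`. -/
def alphaRSpin (r : ℕ) (hr : 0 < r) : (Fin r → ℤ) × ℤ :=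
  (Pi.single (⟨r - 1, by omega⟩ : Fin r) 2, -1)


lemma mem_YQnSpin (r n : ℕ) (p : ℤ) (y : (Fin r → ℤ) × ℤ) :
    y ∈ YQnSpin r n p ↔ ∀ y', (n : ℤ) ∣ BSpin r p y y' := Iff.rfl

lemma BSpin_of_ker (r : ℕ) (p : ℤ) (y y' : (Fin r → ℤ) × ℤ)
    (hy : (∑ i, y.1 i) + 2 * y.2 = 0) :
    BSpin r p y y' = ∑ i, y.1 i * y'.1 i := by
  unfold BSpin
  linear_combination ((2*p-1) * ((∑ i, y'.1 i) + 2 * y'.2)) * hy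

lemma BSpin_smul_left (r : ℕ) (p c : ℤ) (x y : (Fin r → ℤ) × ℤ) :
    BSpin r p (c • x) y = c * BSpin r p x y := by
  simp only [BSpin, Prod.smul_fst, Prod.smul_snd, Pi.smul_apply, smul_eq_mul,
    mul_assoc, ← Finset.mul_sum]
  ring

lemma sum_alphaSpin (r : ℕ) (i : Fin (r - 1)) :
    (∑ j, (alphaSpin r i).1 j) + 2 * (alphaSpin r i).2 = 0 := by
  simp [alphaSpin, Finset.sum_sub_distrib]

lemma sum_alphaRSpin (r : ℕ) (hr : 0 < r) :
    (∑ j, (alphaRSpin r hr).1 j) + 2 * (alphaRSpin r hr).2 = 0 := by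
  simp [alphaRSpin]

lemma BSpin_alphaSpin (r : ℕ) (p : ℤ) (i : Fin (r-1)) :
    BSpin r p (alphaSpin r i) (alphaSpin r i) = 2 := by
  rw [BSpin_of_ker r p _ _ (sum_alphaSpin r i)]
  simp only [alphaSpin, Pi.sub_apply, Pi.single_apply]
  rw [Finset.sum_congr rfl (fun j _ =>
    show ((if j = (⟨i.1, by have := i.2; omega⟩ : Fin r) then (1:ℤ) else 0)
        - (if j = (⟨i.1 + 1, by have := i.2; omega⟩ : Fin r) then 1 else 0))
        * ((if j = (⟨i.1, by have := i.2; omega⟩ : Fin r) then (1:ℤ) else 0)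
        - (if j = (⟨i.1 + 1, by have := i.2; omega⟩ : Fin r) then 1 else 0))
      = (if j = (⟨i.1, by have := i.2; omega⟩ : Fin r) then (1:ℤ) else 0)
      + (if j = (⟨i.1 + 1, by have := i.2; omega⟩ : Fin r) then 1 else 0) from by
    split_ifs with h1 h2 <;> simp_all)]
  rw [Finset.sum_add_distrib]
  simp

lemma BSpin_alphaRSpin (r : ℕ) (p : ℤ) (hr : 0 < r) :
    BSpin r p (alphaRSpin r hr) (alphaRSpin r hr) = 4 := by
  rw [BSpin_of_ker r p _ _ (sum_alphaRSpin r hr)]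
  simp [alphaRSpin, Pi.single_apply]

open Finset in
lemma span_A (r : ℕ) (w : Fin r → ℤ) (hw : ∑ j, w j = 0) :
    ((w, 0) : (Fin r → ℤ) × ℤ) ∈ AddSubgroup.closure (Set.range (alphaSpin r)) := by
  classical
  set W : ℕ → ℤ := fun t => if h : t < r then w ⟨t, h⟩ else 0 with hWdef
  have hWsum : ∑ t ∈ Finset.range r, W t = 0 := by
    rw [← Fin.sum_univ_eq_sum_range, ← hw]
    exact Finset.sum_congr rfl fun i _ => by simp [hWdef, i.2]
  have key : ((w, 0) : (Fin r → ℤ) × ℤ)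
      = ∑ i : Fin (r-1), (∑ t ∈ Finset.range (i.1+1), W t) • alphaSpin r i := by
    rw [Prod.ext_iff]
    constructor
    · funext k
      rw [Prod.fst_sum]
      rw [Finset.sum_apply]
      have step : ∀ i : Fin (r-1),
          ((∑ t ∈ Finset.range (i.1+1), W t) • alphaSpin r i).1 k
            = (∑ t ∈ Finset.range (i.1+1), W t) *
              ((if k.1 = i.1 then 1 else 0) - (if k.1 = i.1 + 1 then 1 else 0)) := by
        intro i
        simp [alphaSpin, Pi.single_apply, Fin.ext_iff]
      rw [Finset.sum_congr rfl fun i _ => step i]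
      rw [Fin.sum_univ_eq_sum_range
        (fun j => (∑ t ∈ Finset.range (j+1), W t) *
          ((if k.1 = j then 1 else 0) - (if k.1 = j + 1 then 1 else 0)))]
      simp only [mul_sub, mul_ite, mul_one, mul_zero, Finset.sum_sub_distrib]
      rw [show (∑ j ∈ range (r-1), if k.1 = j then (∑ t ∈ Finset.range (j+1), W t) else 0)
            = if k.1 ∈ range (r-1) then (∑ t ∈ Finset.range (k.1+1), W t) else 0 from
          Finset.sum_ite_eq _ _ _]
      have shift : (∑ j ∈ range (r-1), if k.1 = j + 1 then (∑ t ∈ Finset.range (j+1), W t) else 0)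
          = ∑ j ∈ Finset.Ico 1 r, if k.1 = j then (∑ t ∈ Finset.range j, W t) else 0 := by
        rw [Finset.sum_Ico_eq_sum_range]
        refine Finset.sum_congr rfl fun j _ => ?_
        rw [add_comm 1 j]
      rw [shift, Finset.sum_ite_eq]
      have hk := k.2
      simp only [Finset.mem_range, Finset.mem_Ico]
      have hWk : w k = W k.1 := by simp [hWdef, k.2]
      rcases Nat.lt_or_ge k.1 (r-1) with h1 | h1
      · rcases Nat.eq_zero_or_pos k.1 with h0 | h0
        · rw [if_pos h1, if_neg (by omega), hWk, h0, Finset.sum_range_one]; ring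
        · rw [if_pos h1, if_pos ⟨h0, hk⟩]
          rw [show k.1 = (k.1 - 1) + 1 from by omega] at hWk ⊢
          rw [Finset.sum_range_succ]
          rw [hWk]; ring
      · have hkr : k.1 = r - 1 := by omega
        rcases Nat.eq_zero_or_pos k.1 with h0 | h0
        · have hr1 : r = 1 := by omega
          rw [if_neg (by omega), if_neg (by omega), hWk, h0]
          rw [hr1, Finset.sum_range_one] at hWsum
          omega
        · rw [if_neg (by omega), if_pos ⟨h0, hk⟩]
          rw [show r = (r-1)+1 from by omega, Finset.sum_range_succ] at hWsum
          rw [hWk, hkr]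
          omega
    · rw [Prod.snd_sum]
      simp [alphaSpin]
  rw [key]
  exact AddSubgroup.sum_mem _ fun i _ =>
    AddSubgroup.zsmul_mem _ (AddSubgroup.subset_closure (Set.mem_range_self i)) _

def FSpin (r : ℕ) : ((Fin r → ℤ) × ℤ) →+ ℤ :=
  AddMonoidHom.mk' (fun y => (∑ i, y.1 i) + 2 * y.2) (by
    intro a b
    simp only [Prod.fst_add, Prod.snd_add, Pi.add_apply, Finset.sum_add_distrib]
    ring)

-- decomposition lemma
lemma decomp (r : ℕ) (hr : 0 < r) (y : (Fin r → ℤ) × ℤ) (c : ℤ) (hc : y.2 = -c) :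
    y = c • alphaRSpin r hr
      + (((fun j => y.1 j + (Pi.single (⟨r - 1, by omega⟩ : Fin r) (2 * y.2) : Fin r → ℤ) j), 0)
        : (Fin r → ℤ) × ℤ) := by
  rw [Prod.ext_iff]
  constructor
  · funext j
    simp only [alphaRSpin, Prod.fst_add, Prod.smul_fst, Pi.add_apply, Pi.smul_apply,
      Pi.single_apply, smul_eq_mul]
    split_ifs <;> omega
  · simp [alphaRSpin, hc]

lemma part3Spin (r : ℕ) (hr : 0 < r) :
    ((AddSubgroup.closure (insert (alphaRSpin r hr) (Set.range (alphaSpin r)))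
        : AddSubgroup ((Fin r → ℤ) × ℤ)) : Set ((Fin r → ℤ) × ℤ))
      = {y | (∑ i, y.1 i) + 2 * y.2 = 0} := by
  ext y
  simp only [SetLike.mem_coe, Set.mem_setOf_eq]
  constructor
  · intro hy
    have hle : AddSubgroup.closure (insert (alphaRSpin r hr) (Set.range (alphaSpin r)))
        ≤ (FSpin r).ker := by
      rw [AddSubgroup.closure_le]
      rintro x (rfl | ⟨i, rfl⟩)
      · exact sum_alphaRSpin r hr
      · exact sum_alphaSpin r i
    exact hle hy
  · intro hy
    rw [decomp r hr y (-y.2) (by ring)]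
    refine AddSubgroup.add_mem _
      (AddSubgroup.zsmul_mem _ (AddSubgroup.subset_closure (Set.mem_insert _ _)) _) ?_
    refine AddSubgroup.closure_mono (Set.subset_insert _ _) (span_A r _ ?_)
    have hs : ∑ x : Fin r, (Pi.single (⟨r - 1, by omega⟩ : Fin r) (2 * y.2) : Fin r → ℤ) x
        = 2 * y.2 := by
      simp [Pi.single_apply]
    rw [Finset.sum_add_distrib, hs]
    linarith [hy]

lemma span_A_n (r n : ℕ) (hn : 0 < n) (w : Fin r → ℤ) (hdvd : ∀ j, (n:ℤ) ∣ w j)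
    (hw : ∑ j, w j = 0) :
    ((w, 0) : (Fin r → ℤ) × ℤ)
      ∈ AddSubgroup.closure (Set.range fun i : Fin (r-1) => (n : ℤ) • alphaSpin r i) := by
  choose u hu using hdvd
  have hn0 : ((n:ℤ)) ≠ 0 := by exact_mod_cast hn.ne'
  have husum : ∑ j, u j = 0 := by
    have h1 : (n:ℤ) * ∑ j, u j = 0 := by
      rw [Finset.mul_sum, ← hw]
      exact Finset.sum_congr rfl fun j _ => (hu j).symm
    exact (mul_eq_zero.mp h1).resolve_left hn0
  have heq : ((w, 0) : (Fin r → ℤ) × ℤ) = (n:ℤ) • ((u, 0) : (Fin r → ℤ) × ℤ) := by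
    rw [Prod.ext_iff]
    constructor
    · funext j; simpa using hu j
    · simp
  have hmem := span_A r u husum
  have hmap : (n:ℤ) • ((u, 0) : (Fin r → ℤ) × ℤ)
      ∈ (AddSubgroup.closure (Set.range (alphaSpin r))).map
          (smulAddHom ℤ ((Fin r → ℤ) × ℤ) (n:ℤ)) :=
    AddSubgroup.mem_map_of_mem _ hmem
  rw [AddMonoidHom.map_closure] at hmap
  rw [heq]
  refine AddSubgroup.closure_mono (le_of_eq ?_) hmap
  rw [← Set.range_comp]
  rfl

lemma n_dvd_two_m (n : ℕ) : (n:ℤ) ∣ 2 * ((n / Nat.gcd n 2 : ℕ) : ℤ) := by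
  have h : n ∣ 2 * (n / Nat.gcd n 2) := by
    obtain ⟨t, ht⟩ := Nat.gcd_dvd_right n 2
    refine ⟨t, ?_⟩
    have h2 := Nat.div_mul_cancel (Nat.gcd_dvd_left n 2)
    calc 2 * (n / Nat.gcd n 2) = (Nat.gcd n 2 * t) * (n / Nat.gcd n 2) := by rw [← ht]
    _ = (n / Nat.gcd n 2 * Nat.gcd n 2) * t := by ring
    _ = n * t := by rw [h2]
  exact_mod_cast Int.natCast_dvd_natCast.mpr h

lemma m_dvd (n : ℕ) (hn : 0 < n) (c : ℤ) (h : (n:ℤ) ∣ 2 * c) :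
    ((n / Nat.gcd n 2 : ℕ) : ℤ) ∣ c := by
  rcases Nat.even_or_odd n with ⟨k, hk⟩ | hodd
  · have hg : Nat.gcd n 2 = 2 := by
      rw [Nat.gcd_comm]; exact Nat.gcd_eq_left ⟨k, by omega⟩
    have hdiv : n / Nat.gcd n 2 = k := by rw [hg]; omega
    rw [hdiv]
    obtain ⟨t, ht⟩ := h
    refine ⟨t, ?_⟩
    have hn2 : (n:ℤ) = 2 * (k:ℤ) := by
      have : n = 2 * k := by omega
      exact_mod_cast this
    rw [hn2] at ht
    linarith [ht]
  · have hg : Nat.gcd n 2 = 1 := hodd.coprime_two_right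
    rw [hg, Nat.div_one]
    have hg1 : Int.gcd (n:ℤ) 2 = 1 := by
      simpa [Int.gcd] using hg
    exact Int.dvd_of_dvd_mul_left_of_gcd_one (by rwa [mul_comm] at h) hg1

lemma part4Spin (r n : ℕ) (hr : 0 < r) (hn : 0 < n) (p : ℤ) :
    AddSubgroup.closure (insert (alphaRSpin r hr) (Set.range (alphaSpin r)))
        ⊓ YQnSpin r n p
      = AddSubgroup.closure
          (insert (((n / Nat.gcd n 2 : ℕ) : ℤ) • alphaRSpin r hr)
            (Set.range fun i : Fin (r - 1) => (n : ℤ) • alphaSpin r i)) := by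
  apply le_antisymm
  · intro y hy
    obtain ⟨hy1, hy2⟩ := AddSubgroup.mem_inf.mp hy
    rw [mem_YQnSpin] at hy2
    have hker : (∑ i, y.1 i) + 2 * y.2 = 0 := by
      have h := part3Spin r hr
      have : y ∈ ({y : (Fin r → ℤ) × ℤ | (∑ i, y.1 i) + 2 * y.2 = 0} : Set _) := by
        rw [← h]; exact hy1
      exact this
    have hdvd : ∀ j, (n:ℤ) ∣ y.1 j := by
      intro j
      have h := hy2 ((Pi.single j 1 : Fin r → ℤ), 0)
      rw [BSpin_of_ker r p _ _ hker] at h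
      have hs : ∑ i, y.1 i * (Pi.single j 1 : Fin r → ℤ) i = y.1 j := by
        simp [Pi.single_apply]
      rwa [hs] at h
    have hdvd2 : (n:ℤ) ∣ 2 * y.2 := by
      have hs : (n:ℤ) ∣ ∑ i, y.1 i := Finset.dvd_sum fun i _ => hdvd i
      have h2 : 2 * y.2 = -(∑ i, y.1 i) := by linarith [hker]
      rw [h2]
      exact dvd_neg.mpr hs
    obtain ⟨t, ht⟩ := m_dvd n hn y.2 hdvd2
    rw [decomp r hr y (-(((n / Nat.gcd n 2 : ℕ) : ℤ) * t)) (by rw [ht]; ring)]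
    refine AddSubgroup.add_mem _ ?_ ?_
    · rw [show (-(((n / Nat.gcd n 2 : ℕ) : ℤ) * t)) • alphaRSpin r hr
          = (-t) • (((n / Nat.gcd n 2 : ℕ) : ℤ) • alphaRSpin r hr) from by
        rw [smul_smul]; ring_nf]
      exact AddSubgroup.zsmul_mem _ (AddSubgroup.subset_closure (Set.mem_insert _ _)) _
    · refine AddSubgroup.closure_mono (Set.subset_insert _ _) (span_A_n r n hn _ ?_ ?_)
      · intro j
        rcases eq_or_ne j (⟨r-1, by omega⟩ : Fin r) with h | h
        · simpa [h, Pi.single_apply] using dvd_add (hdvd j) hdvd2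
        · simpa [Pi.single_apply, h] using hdvd j
      · have hs : ∑ x : Fin r,
            (Pi.single (⟨r - 1, by omega⟩ : Fin r) (2 * y.2) : Fin r → ℤ) x = 2 * y.2 := by
          simp [Pi.single_apply]
        rw [Finset.sum_add_distrib, hs]
        linarith [hker]
  · rw [AddSubgroup.closure_le]
    rintro x (rfl | ⟨i, rfl⟩)
    · rw [SetLike.mem_coe, AddSubgroup.mem_inf]
      constructor
      · exact AddSubgroup.zsmul_mem _ (AddSubgroup.subset_closure (Set.mem_insert _ _)) _
      · rw [mem_YQnSpin]
        intro y'
        rw [BSpin_smul_left, BSpin_of_ker r p _ _ (sum_alphaRSpin r hr)]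
        have hs : ∑ i, (alphaRSpin r hr).1 i * y'.1 i = 2 * y'.1 ⟨r-1, by omega⟩ := by
          simp [alphaRSpin, Pi.single_apply]
        rw [hs, show ((n / Nat.gcd n 2 : ℕ) : ℤ) * (2 * y'.1 ⟨r-1, by omega⟩)
          = (2 * ((n / Nat.gcd n 2 : ℕ) : ℤ)) * y'.1 ⟨r-1, by omega⟩ from by ring]
        exact (n_dvd_two_m n).mul_right _
    · rw [SetLike.mem_coe, AddSubgroup.mem_inf]
      constructor
      · exact AddSubgroup.zsmul_mem _
          (AddSubgroup.subset_closure (Set.mem_insert_of_mem _ (Set.mem_range_self i))) _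
      · rw [mem_YQnSpin]
        intro y'
        rw [BSpin_smul_left]
        exact dvd_mul_right _ _

/-- `Q(α_i^∨) = 1` and `Q(α_r^∨) = 2` (i.e. `B(α_i^∨,α_i^∨) = 2` and
`B(α_r^∨,α_r^∨) = 4`), the span `Y_0` of the simple coroots is
`{y ∈ Y : y_1 + ⋯ + y_r + 2y_0 = 0}`, and `Y_0 ∩ Y_{Q,n}` is the ℤ-span of
`{n·α_i^∨ : 1 ≤ i ≤ r-1} ∪ {n_{(2)}·α_r^∨}`; that is, `Y_0 ∩ Y_{Q,n} = Y_{Q,n}^{sc}`,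
so every such cover of `GSpin_{2r+1}` is saturated. -/
theorem stmt12 (r n : ℕ) (hr : 0 < r) (hn : 0 < n) (p : ℤ) :
    (∀ i : Fin (r - 1), BSpin r p (alphaSpin r i) (alphaSpin r i) = 2) ∧
    BSpin r p (alphaRSpin r hr) (alphaRSpin r hr) = 4 ∧
    ((AddSubgroup.closure (insert (alphaRSpin r hr) (Set.range (alphaSpin r)))
        : AddSubgroup ((Fin r → ℤ) × ℤ)) : Set ((Fin r → ℤ) × ℤ))
      = {y | (∑ i, y.1 i) + 2 * y.2 = 0} ∧
    AddSubgroup.closure (insert (alphaRSpin r hr) (Set.range (alphaSpin r)))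
        ⊓ YQnSpin r n p
      = AddSubgroup.closure
          (insert (((n / Nat.gcd n 2 : ℕ) : ℤ) • alphaRSpin r hr)
            (Set.range fun i : Fin (r - 1) => (n : ℤ) • alphaSpin r i)) := by
  exact ⟨fun i => BSpin_alphaSpin r p i, BSpin_alphaRSpin r p hr,
    part3Spin r hr, part4Spin r n hr hn p⟩
end

section
/- With the notation of the context, assume 2𝐩 − 𝐪 = −1 (the Kazhdan–Patterson case) and r ≥ 2. Then Y_0 ∩ Y_{Q,n} = nY_0, and the index [Y_{0,Q,n} : Y_0 ∩ Y_{Q,n}] equals gcd(n, r). -/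
/-- The symmetric bilinear form on `Y = ℤ^r` attached to an `n`-fold Brylinski–Deligne
cover of `GL_r`: `B(e_i, e_i) = 2𝐩` and `B(e_i, e_j) = 𝐪` for `i ≠ j`. -/
def BGL (r : ℕ) (p q : ℤ) (x y : Fin r → ℤ) : ℤ :=
  2 * p * (∑ i, x i * y i) + q * ((∑ i, x i) * (∑ i, y i) - ∑ i, x i * y i)

lemma BGL_add_left (r : ℕ) (p q : ℤ) (a b y : Fin r → ℤ) :
    BGL r p q (a + b) y = BGL r p q a y + BGL r p q b y := by
  simp only [BGL, Pi.add_apply, add_mul, Finset.sum_add_distrib]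
  ring

lemma BGL_neg_left (r : ℕ) (p q : ℤ) (a y : Fin r → ℤ) :
    BGL r p q (-a) y = -BGL r p q a y := by
  simp only [BGL, Pi.neg_apply, neg_mul, Finset.sum_neg_distrib]
  ring

/-- The lattice `Y_{Q,n} = {y ∈ Y : B(y, y') ∈ nℤ for all y' ∈ Y}`. -/
def YQnGL (r n : ℕ) (p q : ℤ) : AddSubgroup (Fin r → ℤ) where
  carrier := {y | ∀ y', (n : ℤ) ∣ BGL r p q y y'}
  zero_mem' := by
    intro y'
    simp [BGL]
  add_mem' := by
    intro a b ha hb y'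
    rw [BGL_add_left]
    exact dvd_add (ha y') (hb y')
  neg_mem' := by
    intro a ha y'
    rw [BGL_neg_left]
    exact dvd_neg.mpr (ha y')

/-- `n_α = n / gcd(n, Q(α^∨))` with `Q(α^∨) = 2𝐩 - 𝐪`. -/
def nAlpha (n : ℕ) (p q : ℤ) : ℕ := n / Int.gcd (n : ℤ) (2 * p - q)

/-- The coroot lattice `Y_0 = {y ∈ ℤ^r : y_1 + ⋯ + y_r = 0}` of `GL_r`. -/
def Y0GL (r : ℕ) : AddSubgroup (Fin r → ℤ) where
  carrier := {y | ∑ i, y i = 0}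
  zero_mem' := by simp
  add_mem' := by
    intro a b ha hb
    have ha' : ∑ i, a i = 0 := ha
    have hb' : ∑ i, b i = 0 := hb
    show ∑ i, (a + b) i = 0
    simp only [Pi.add_apply, Finset.sum_add_distrib, ha', hb', add_zero]
  neg_mem' := by
    intro a ha
    have ha' : ∑ i, a i = 0 := ha
    show ∑ i, (-a) i = 0
    simp only [Pi.neg_apply, Finset.sum_neg_distrib, ha', neg_zero]

/-- The lattice `Y_{0,Q,n} = {y ∈ Y_0 : B(y, y') ∈ nℤ for all y' ∈ Y_0}`. -/
def Y0QnGL (r n : ℕ) (p q : ℤ) : AddSubgroup (Fin r → ℤ) where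
  carrier := {y | (∑ i, y i = 0) ∧
      ∀ y' : Fin r → ℤ, (∑ i, y' i = 0) → (n : ℤ) ∣ BGL r p q y y'}
  zero_mem' := ⟨by simp, fun y' _ => by simp [BGL]⟩
  add_mem' := by
    rintro a b ⟨ha0, ha⟩ ⟨hb0, hb⟩
    refine ⟨?_, fun y' hy' => ?_⟩
    · simp only [Pi.add_apply, Finset.sum_add_distrib, ha0, hb0, add_zero]
    · rw [BGL_add_left]
      exact dvd_add (ha y' hy') (hb y' hy')
  neg_mem' := by
    rintro a ⟨ha0, ha⟩
    refine ⟨?_, fun y' hy' => ?_⟩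
    · simp only [Pi.neg_apply, Finset.sum_neg_distrib, ha0, neg_zero]
    · rw [BGL_neg_left]
      exact dvd_neg.mpr (ha y' hy')


section Aux

lemma BGL_of_sum_zero (r : ℕ) (p q : ℤ) (hpq : 2 * p - q = -1) (x y : Fin r → ℤ)
    (hx : ∑ i, x i = 0) : BGL r p q x y = -∑ i, x i * y i := by
  have : BGL r p q x y = (2 * p - q) * ∑ i, x i * y i := by rw [BGL, hx]; ring
  rw [this, hpq]; ring

lemma sum_mul_single (r : ℕ) (y : Fin r → ℤ) (i : Fin r) :
    ∑ j, y j * (Pi.single i 1 : Fin r → ℤ) j = y i := by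
  simp [Pi.single_apply, mul_ite, Finset.sum_ite_eq']

lemma mem_inf_iff (r n : ℕ) (p q : ℤ) (hpq : 2 * p - q = -1) (y : Fin r → ℤ) :
    y ∈ Y0GL r ⊓ YQnGL r n p q ↔ (∑ i, y i = 0) ∧ ∀ i, (n : ℤ) ∣ y i := by
  rw [AddSubgroup.mem_inf]
  constructor
  · rintro ⟨h0, hd⟩
    have h0' : ∑ i, y i = 0 := h0
    refine ⟨h0', fun i => ?_⟩
    have := hd (Pi.single i 1 : Fin r → ℤ)
    rw [BGL_of_sum_zero r p q hpq _ _ h0', sum_mul_single] at this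
    exact dvd_neg.mp this
  · rintro ⟨h0, hd⟩
    refine ⟨h0, fun y' => ?_⟩
    rw [BGL_of_sum_zero r p q hpq _ _ h0]
    exact dvd_neg.mpr (Finset.dvd_sum fun i _ => (hd i).mul_right _)

lemma mem_K_iff (r n : ℕ) [NeZero r] (p q : ℤ) (hpq : 2 * p - q = -1) (y : Fin r → ℤ) :
    y ∈ Y0QnGL r n p q ↔ (∑ i, y i = 0) ∧ ∀ i, (n : ℤ) ∣ (y i - y 0) := by
  constructor
  · rintro ⟨h0, hd⟩
    refine ⟨h0, fun i => ?_⟩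
    have hsum : ∑ j, ((Pi.single i 1 - Pi.single 0 1 : Fin r → ℤ)) j = 0 := by
      simp [Finset.sum_sub_distrib, Pi.single_apply, Finset.sum_ite_eq']
    have := hd _ hsum
    rw [BGL_of_sum_zero r p q hpq _ _ h0] at this
    have hval : ∑ j, y j * (Pi.single i 1 - Pi.single 0 1 : Fin r → ℤ) j = y i - y 0 := by
      simp only [Pi.sub_apply, mul_sub, Finset.sum_sub_distrib, sum_mul_single]
    rw [hval] at this
    exact dvd_neg.mp this
  · rintro ⟨h0, hd⟩
    refine ⟨h0, fun y' hy' => ?_⟩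
    rw [BGL_of_sum_zero r p q hpq _ _ h0]
    have : ∑ j, y j * y' j = ∑ j, (y j - y 0) * y' j := by
      simp [sub_mul, Finset.sum_sub_distrib, ← Finset.mul_sum, hy']
    rw [this]
    exact dvd_neg.mpr (Finset.dvd_sum fun j _ => (hd j).mul_right _)

end Aux

/-- In the Kazhdan–Patterson case `2𝐩 - 𝐪 = -1` with `r ≥ 2`:
`Y_0 ∩ Y_{Q,n} = nY_0` and `[Y_{0,Q,n} : Y_0 ∩ Y_{Q,n}] = gcd(n, r)`. -/
theorem stmt14 (r n : ℕ) (hr : 2 ≤ r) (hn : 0 < n) (p q : ℤ) (hpq : 2 * p - q = -1) :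
    ((Y0GL r ⊓ YQnGL r n p q : AddSubgroup (Fin r → ℤ)) : Set (Fin r → ℤ))
        = {y | (∑ i, y i = 0) ∧ ∀ i, (n : ℤ) ∣ y i} ∧
    (Y0GL r ⊓ YQnGL r n p q).relIndex (Y0QnGL r n p q) = Nat.gcd n r := by
  haveI : NeZero r := ⟨by omega⟩
  have hnz : n ≠ 0 := hn.ne'
  set d := Nat.gcd n r with hd_def
  set m := n / d with hm_def
  have hd_pos : 0 < d := Nat.gcd_pos_of_pos_left _ hn
  have hdm : d * m = n := Nat.mul_div_cancel' (Nat.gcd_dvd_left n r)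
  have hdr : d * (r / d) = r := Nat.mul_div_cancel' (Nat.gcd_dvd_right n r)
  have hmr : (n : ℤ) ∣ (m : ℤ) * r := by
    refine ⟨(r / d : ℕ), ?_⟩
    have : m * r = n * (r / d) := by
      calc m * r = m * (d * (r / d)) := by rw [hdr]
        _ = (d * m) * (r / d) := by ring
        _ = n * (r / d) := by rw [hdm]
    exact_mod_cast this
  constructor
  · ext y
    simpa using mem_inf_iff r n p q hpq y
  · -- the homomorphism K → ZMod n, y ↦ y 0
    let φ : (Y0QnGL r n p q) →+ ZMod n :=
      { toFun := fun y => (((y : Fin r → ℤ) 0 : ℤ) : ZMod n)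
        map_zero' := by simp
        map_add' := fun a b => by
          show ((((a : Fin r → ℤ) + (b : Fin r → ℤ)) 0 : ℤ) : ZMod n)
              = (((a : Fin r → ℤ) 0 : ℤ) : ZMod n) + (((b : Fin r → ℤ) 0 : ℤ) : ZMod n)
          rw [Pi.add_apply]; push_cast; ring }
    have hker : φ.ker = (Y0GL r ⊓ YQnGL r n p q).addSubgroupOf (Y0QnGL r n p q) := by
      ext y
      obtain ⟨h0, hdiff⟩ := (mem_K_iff r n p q hpq (y : Fin r → ℤ)).mp y.2
      rw [AddMonoidHom.mem_ker, AddSubgroup.mem_addSubgroupOf,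
        mem_inf_iff r n p q hpq]
      constructor
      · intro h
        have h00 : (n : ℤ) ∣ (y : Fin r → ℤ) 0 :=
          (ZMod.intCast_zmod_eq_zero_iff_dvd _ n).mp h
        refine ⟨h0, fun i => ?_⟩
        have := dvd_add (hdiff i) h00
        simpa using this
      · rintro ⟨-, hall⟩
        exact (ZMod.intCast_zmod_eq_zero_iff_dvd _ n).mpr (hall 0)
    have hrel : (Y0GL r ⊓ YQnGL r n p q).relIndex (Y0QnGL r n p q)
        = Nat.card φ.range := by
      rw [AddSubgroup.relIndex, ← hker, AddSubgroup.index_ker]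
    have hrange : φ.range = AddSubgroup.zmultiples ((m : ZMod n)) := by
      apply le_antisymm
      · rintro _ ⟨y, rfl⟩
        obtain ⟨h0, hdiff⟩ := (mem_K_iff r n p q hpq (y : Fin r → ℤ)).mp y.2
        have hry : (n : ℤ) ∣ (r : ℤ) * (y : Fin r → ℤ) 0 := by
          have heq : (r : ℤ) * (y : Fin r → ℤ) 0
              = -∑ i, ((y : Fin r → ℤ) i - (y : Fin r → ℤ) 0) := by
            rw [Finset.sum_sub_distrib, h0, Finset.sum_const]
            simp [Finset.card_fin]
          rw [heq]
          exact dvd_neg.mpr (Finset.dvd_sum fun i _ => hdiff i)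
        have hco : IsCoprime ((m : ℤ)) ((r / d : ℕ) : ℤ) :=
          (Nat.coprime_div_gcd_div_gcd hd_pos).isCoprime
        have hmy : (m : ℤ) ∣ (y : Fin r → ℤ) 0 := by
          have key : (d : ℤ) * ((m : ℤ) * 1) ∣ (d : ℤ) * (((r / d : ℕ) : ℤ) * (y : Fin r → ℤ) 0) := by
            have h1 : (d : ℤ) * (m : ℤ) = (n : ℤ) := by exact_mod_cast hdm
            have h2 : (d : ℤ) * ((r / d : ℕ) : ℤ) = (r : ℤ) := by exact_mod_cast hdr
            rw [mul_one, h1, ← mul_assoc, h2]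
            exact hry
          have := (mul_dvd_mul_iff_left (show (d : ℤ) ≠ 0 by exact_mod_cast hd_pos.ne')).mp key
          rw [mul_one] at this
          exact hco.dvd_of_dvd_mul_left this
        obtain ⟨k, hk⟩ := hmy
        refine AddSubgroup.mem_zmultiples_iff.mpr ⟨k, ?_⟩
        have : (k : ZMod n) * (m : ZMod n) = (((y : Fin r → ℤ) 0 : ℤ) : ZMod n) := by
          rw [hk]; push_cast; ring
        simpa [φ, zsmul_eq_mul, mul_comm] using this
      · rw [AddSubgroup.zmultiples_le]
        -- the witness g
        set g : Fin r → ℤ := fun i => (m : ℤ) * ((Pi.single 0 (-(r : ℤ)) : Fin r → ℤ) i + 1) with hg_def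
        have hg0 : g 0 = (m : ℤ) * (1 - r) := by
          show (m : ℤ) * ((Pi.single 0 (-(r : ℤ)) : Fin r → ℤ) 0 + 1) = (m : ℤ) * (1 - r)
          rw [Pi.single_eq_same]; ring
        have hgsum : ∑ i, g i = 0 := by
          simp only [hg_def, ← Finset.mul_sum, Finset.sum_add_distrib]
          rw [Finset.sum_pi_single']
          simp [Finset.card_fin]
        have hgK : g ∈ Y0QnGL r n p q := by
          refine (mem_K_iff r n p q hpq g).mpr ⟨hgsum, fun i => ?_⟩
          rcases eq_or_ne i 0 with rfl | hi
          · simp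
          · have hgi : g i = (m : ℤ) := by
              show (m : ℤ) * ((Pi.single 0 (-(r : ℤ)) : Fin r → ℤ) i + 1) = (m : ℤ)
              rw [Pi.single_eq_of_ne hi]; ring
            have : g i - g 0 = (m : ℤ) * r := by rw [hgi, hg0]; ring
            rw [this]
            exact hmr
        refine ⟨⟨g, hgK⟩, ?_⟩
        show ((g 0 : ℤ) : ZMod n) = (m : ZMod n)
        rw [hg0]
        have heq : ((m : ℤ) * (1 - (r : ℤ)) - (m : ℤ) : ℤ) = -((m : ℤ) * r) := by ring
        have hz : (((m : ℤ) * (1 - (r : ℤ)) - (m : ℤ) : ℤ) : ZMod n) = 0 := by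
          rw [heq]
          exact (ZMod.intCast_zmod_eq_zero_iff_dvd _ n).mpr (dvd_neg.mpr hmr)
        have hgoal : (((m : ℤ) * (1 - (r : ℤ)) : ℤ) : ZMod n) = (((m : ℤ) : ℤ) : ZMod n) := by
          rw [← sub_eq_zero, ← Int.cast_sub, hz]
        rw [hgoal, Int.cast_natCast]
    rw [hrel, hrange, Nat.card_zmultiples, ZMod.addOrderOf_coe m hnz]
    have hmd : m ∣ n := Nat.div_dvd_of_dvd (Nat.gcd_dvd_left n r)
    rw [Nat.gcd_eq_right hmd]
    exact Nat.div_div_self (Nat.gcd_dvd_left n r) hnz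
end

section
/- With the notation of the context, assume 2𝐩 − 𝐪 = −1 (the Kazhdan–Patterson case), and set e_c := e_1 + ⋯ + e_r, b := (2𝐩 + 1)r − 1, and Y_c := ℤe_c. Then B(e_c, e_i) = b for every i and B(e_c, e_c) = rb; moreover Y_c ∩ Y_{Q,n} = (n/gcd(n, b))·ℤe_c, the lattice Y_{c,Q,n} := { y ∈ Y_c : B(y, y') ∈ nℤ for all y' ∈ Y_c } equals (n/gcd(n, rb))·ℤe_c, and n/gcd(n, b) = gcd(n, r) · (n/gcd(n, rb)). In particular, Y_c ∩ Y_{Q,n} = Y_{c,Q,n} if and only if gcd(n, r) = 1. -/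
/-- The central cocharacter `e_c = e_1 + ⋯ + e_r` of `GL_r`. -/
def ecGL (r : ℕ) : Fin r → ℤ := fun _ => 1

/-- The lattice `Y_{c,Q,n} = {y ∈ Y_c : B(y, y') ∈ nℤ for all y' ∈ Y_c}`, where
`Y_c = ℤe_c`. -/
def YcQnGL (r n : ℕ) (p q : ℤ) : AddSubgroup (Fin r → ℤ) where
  carrier := {y | y ∈ AddSubgroup.zmultiples (ecGL r) ∧
      ∀ y' ∈ AddSubgroup.zmultiples (ecGL r), (n : ℤ) ∣ BGL r p q y y'}
  zero_mem' := ⟨zero_mem _, fun y' _ => by simp [BGL]⟩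
  add_mem' := by
    rintro a b ⟨haz, ha⟩ ⟨hbz, hb⟩
    refine ⟨add_mem haz hbz, fun y' hy' => ?_⟩
    rw [BGL_add_left]
    exact dvd_add (ha y' hy') (hb y' hy')
  neg_mem' := by
    rintro a ⟨haz, ha⟩
    refine ⟨neg_mem haz, fun y' hy' => ?_⟩
    rw [BGL_neg_left]
    exact dvd_neg.mpr (ha y' hy')

section Helpers

lemma smul_ecGL (r : ℕ) (m : ℤ) : m • ecGL r = fun _ => m := by
  funext i; simp [ecGL]

lemma BGL_const (r : ℕ) (p q : ℤ) (hpq : 2 * p - q = -1) (c : ℤ) (y' : Fin r → ℤ) :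
    BGL r p q (fun _ => c) y' = c * (∑ i, y' i) * ((2 * p + 1) * (r : ℤ) - 1) := by
  have hq : q = 2 * p + 1 := by omega
  subst hq
  simp only [BGL, ← Finset.mul_sum, Finset.sum_const, Finset.card_univ, Fintype.card_fin,
    nsmul_eq_mul]
  ring

lemma gcd_mul_of_coprime (n : ℕ) {a b : ℕ} (h : Nat.Coprime a b) :
    Nat.gcd n (a * b) = Nat.gcd n a * Nat.gcd n b := by
  have hx : Nat.gcd n (a * b) ∣ a * b := Nat.gcd_dvd_right _ _
  have key := (Nat.gcd_mul_gcd_eq_iff_dvd_mul_of_coprime (x := Nat.gcd n (a * b)) h).mpr hx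
  have h1 : Nat.gcd (Nat.gcd n (a * b)) a = Nat.gcd n a := by
    rw [Nat.gcd_assoc, Nat.gcd_comm (a * b) a, Nat.gcd_eq_left (dvd_mul_right a b)]
  have h2 : Nat.gcd (Nat.gcd n (a * b)) b = Nat.gcd n b := by
    rw [Nat.gcd_assoc, Nat.gcd_comm (a * b) b, Nat.gcd_eq_left (dvd_mul_left b a)]
  rw [← key, h1, h2]

lemma dvd_mul_iff_div_gcd_dvd (n : ℕ) (hn : 0 < n) (b m : ℤ) :
    (n : ℤ) ∣ m * b ↔ ((n / Int.gcd (n : ℤ) b : ℕ) : ℤ) ∣ m := by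
  set g : ℕ := Int.gcd (n : ℤ) b with hg
  have hgpos : 0 < g := Int.gcd_pos_iff.mpr (Or.inl (by exact_mod_cast hn.ne'))
  have hgn : g ∣ n := by
    have := Int.gcd_dvd_left (a := (n : ℤ)) (b := b)
    exact_mod_cast this
  obtain ⟨n0, hn0⟩ := hgn
  have hgb : (g : ℤ) ∣ b := Int.gcd_dvd_right _ _
  obtain ⟨b1, hb1⟩ := hgb
  have hdiv : n / g = n0 := by rw [hn0, Nat.mul_div_cancel_left _ hgpos]
  have hcop : IsCoprime (n0 : ℤ) b1 := by
    rw [Int.isCoprime_iff_gcd_eq_one]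
    have hgg : g = g * Int.gcd (n0 : ℤ) b1 := by
      conv_lhs => rw [hg, show (n : ℤ) = (g : ℤ) * (n0 : ℤ) by exact_mod_cast hn0, hb1]
      rw [Int.gcd_mul_left, Int.natAbs_natCast]
    exact Nat.eq_of_mul_eq_mul_left hgpos (by rw [mul_one]; exact hgg.symm)
  rw [hdiv]
  constructor
  · intro h
    have h' : (g : ℤ) * (n0 : ℤ) ∣ (g : ℤ) * (m * b1) := by
      have e1 : ((g : ℤ) * n0) = (n : ℤ) := by exact_mod_cast hn0.symm
      have e2 : (g : ℤ) * (m * b1) = m * b := by rw [hb1]; ring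
      rw [e1, e2]; exact h
    have h'' : (n0 : ℤ) ∣ m * b1 :=
      (mul_dvd_mul_iff_left (by exact_mod_cast hgpos.ne' : (g : ℤ) ≠ 0)).mp h'
    exact hcop.dvd_of_dvd_mul_right h''
  · rintro ⟨k, rfl⟩
    refine ⟨k * b1, ?_⟩
    rw [hb1, show (n : ℤ) = (g : ℤ) * (n0 : ℤ) by exact_mod_cast hn0]
    ring

lemma mem_zmultiples_smul_ecGL {r : ℕ} (hr : 1 ≤ r) (a m : ℤ) :
    (m • ecGL r) ∈ AddSubgroup.zmultiples (a • ecGL r) ↔ a ∣ m := by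
  rw [AddSubgroup.mem_zmultiples_iff]
  constructor
  · rintro ⟨k, hk⟩
    rw [smul_smul] at hk
    have := congrFun hk ⟨0, hr⟩
    simp only [smul_ecGL] at hk
    have h2 := congrFun hk ⟨0, hr⟩
    exact ⟨k, by linarith [h2]⟩
  · rintro ⟨k, rfl⟩
    exact ⟨k, by rw [smul_smul]; congr 1; ring⟩

lemma mem_YQn_smul_ecGL {r n : ℕ} (hr : 1 ≤ r) {p q : ℤ} (hpq : 2 * p - q = -1) (m : ℤ) :
    (m • ecGL r) ∈ YQnGL r n p q ↔ (n : ℤ) ∣ m * ((2 * p + 1) * (r : ℤ) - 1) := by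
  rw [smul_ecGL]
  constructor
  · intro h
    have := h (Pi.single (⟨0, hr⟩ : Fin r) 1)
    rw [BGL_const r p q hpq] at this
    simpa using this
  · intro h y'
    rw [BGL_const r p q hpq,
      show m * (∑ i, y' i) * ((2 * p + 1) * (r : ℤ) - 1)
        = m * ((2 * p + 1) * (r : ℤ) - 1) * (∑ i, y' i) by ring]
    exact h.mul_right _

lemma mem_YcQn_smul_ecGL {r n : ℕ} (hr : 1 ≤ r) {p q : ℤ} (hpq : 2 * p - q = -1) (m : ℤ) :
    (m • ecGL r) ∈ YcQnGL r n p q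
      ↔ (n : ℤ) ∣ m * ((r : ℤ) * ((2 * p + 1) * (r : ℤ) - 1)) := by
  have hsum : (∑ i, ecGL r i) = (r : ℤ) := by simp [ecGL]
  constructor
  · rintro ⟨-, h⟩
    have := h (ecGL r) (AddSubgroup.mem_zmultiples _)
    rw [smul_ecGL, BGL_const r p q hpq, hsum] at this
    rw [show m * ((r : ℤ) * ((2 * p + 1) * (r : ℤ) - 1))
      = m * (r : ℤ) * ((2 * p + 1) * (r : ℤ) - 1) by ring]
    exact this
  · intro h
    refine ⟨AddSubgroup.mem_zmultiples_iff.mpr ⟨m, rfl⟩, ?_⟩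
    intro y' hy'
    obtain ⟨k, rfl⟩ := AddSubgroup.mem_zmultiples_iff.mp hy'
    rw [smul_ecGL, smul_ecGL, BGL_const r p q hpq]
    rw [show (∑ i : Fin r, k) = (r : ℤ) * k by
      simp [Finset.sum_const, Finset.card_univ, mul_comm]]
    rw [show m * ((r : ℤ) * k) * ((2 * p + 1) * (r : ℤ) - 1)
      = m * ((r : ℤ) * ((2 * p + 1) * (r : ℤ) - 1)) * k by ring]
    exact h.mul_right _

end Helpers

/-- In the Kazhdan–Patterson case `2𝐩 - 𝐪 = -1`, with
`b = (2𝐩+1)r - 1`: `B(e_c, e_i) = b` for all `i` and `B(e_c, e_c) = rb`; moreover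
`Y_c ∩ Y_{Q,n} = (n/gcd(n,b))·ℤe_c`, `Y_{c,Q,n} = (n/gcd(n,rb))·ℤe_c`, and
`n/gcd(n,b) = gcd(n,r)·(n/gcd(n,rb))`.  In particular `Y_c ∩ Y_{Q,n} = Y_{c,Q,n}` if and
only if `gcd(n,r) = 1`. -/
theorem stmt15 (r n : ℕ) (hr : 1 ≤ r) (hn : 0 < n) (p q : ℤ) (hpq : 2 * p - q = -1) :
    (∀ i : Fin r, BGL r p q (ecGL r) (Pi.single i 1) = (2 * p + 1) * (r : ℤ) - 1) ∧
    BGL r p q (ecGL r) (ecGL r) = (r : ℤ) * ((2 * p + 1) * (r : ℤ) - 1) ∧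
    AddSubgroup.zmultiples (ecGL r) ⊓ YQnGL r n p q
      = AddSubgroup.zmultiples
          (((n / Int.gcd (n : ℤ) ((2 * p + 1) * (r : ℤ) - 1) : ℕ) : ℤ) • ecGL r) ∧
    YcQnGL r n p q
      = AddSubgroup.zmultiples
          (((n / Int.gcd (n : ℤ) ((r : ℤ) * ((2 * p + 1) * (r : ℤ) - 1)) : ℕ) : ℤ) • ecGL r) ∧
    n / Int.gcd (n : ℤ) ((2 * p + 1) * (r : ℤ) - 1)
      = Nat.gcd n r * (n / Int.gcd (n : ℤ) ((r : ℤ) * ((2 * p + 1) * (r : ℤ) - 1))) ∧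
    (AddSubgroup.zmultiples (ecGL r) ⊓ YQnGL r n p q = YcQnGL r n p q
      ↔ Nat.gcd n r = 1) := by
  set b : ℤ := (2 * p + 1) * (r : ℤ) - 1 with hb
  have hec : ecGL r = fun _ => (1 : ℤ) := rfl
  have hsum : (∑ i, ecGL r i) = (r : ℤ) := by simp [ecGL]
  have part1 : ∀ i : Fin r, BGL r p q (ecGL r) (Pi.single i 1) = b := by
    intro i
    rw [hec, BGL_const r p q hpq]
    simp [hb]
  have part2 : BGL r p q (ecGL r) (ecGL r) = (r : ℤ) * b := by
    conv_lhs => rw [hec, BGL_const r p q hpq]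
    simp only [Finset.sum_const, Finset.card_univ, Fintype.card_fin, nsmul_eq_mul,
      mul_one, one_mul]
    rw [hb]
  set a1 : ℕ := n / Int.gcd (n : ℤ) b with ha1
  set a2 : ℕ := n / Int.gcd (n : ℤ) ((r : ℤ) * b) with ha2
  have part3 : AddSubgroup.zmultiples (ecGL r) ⊓ YQnGL r n p q
      = AddSubgroup.zmultiples ((a1 : ℤ) • ecGL r) := by
    ext x
    simp only [AddSubgroup.mem_inf]
    constructor
    · rintro ⟨hx1, hx2⟩
      obtain ⟨m, rfl⟩ := AddSubgroup.mem_zmultiples_iff.mp hx1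
      rw [mem_zmultiples_smul_ecGL hr]
      exact (dvd_mul_iff_div_gcd_dvd n hn b m).mp ((mem_YQn_smul_ecGL hr hpq m).mp hx2)
    · intro hx
      obtain ⟨k, rfl⟩ := AddSubgroup.mem_zmultiples_iff.mp hx
      rw [smul_smul]
      refine ⟨AddSubgroup.mem_zmultiples_iff.mpr ⟨_, rfl⟩, ?_⟩
      rw [mem_YQn_smul_ecGL hr hpq]
      exact (dvd_mul_iff_div_gcd_dvd n hn b _).mpr ⟨k, by ring⟩
  have part4 : YcQnGL r n p q = AddSubgroup.zmultiples ((a2 : ℤ) • ecGL r) := by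
    ext x
    constructor
    · intro hx
      obtain ⟨m, rfl⟩ := AddSubgroup.mem_zmultiples_iff.mp hx.1
      rw [mem_zmultiples_smul_ecGL hr]
      exact (dvd_mul_iff_div_gcd_dvd n hn ((r : ℤ) * b) m).mp
        ((mem_YcQn_smul_ecGL hr hpq m).mp hx)
    · intro hx
      obtain ⟨k, rfl⟩ := AddSubgroup.mem_zmultiples_iff.mp hx
      rw [smul_smul]
      rw [mem_YcQn_smul_ecGL hr hpq]
      exact (dvd_mul_iff_div_gcd_dvd n hn ((r : ℤ) * b) _).mpr ⟨k, by ring⟩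
  have hcop : Nat.Coprime r b.natAbs := by
    have : IsCoprime (r : ℤ) b := ⟨2 * p + 1, -1, by rw [hb]; ring⟩
    have h1 : Int.gcd (r : ℤ) b = 1 := Int.isCoprime_iff_gcd_eq_one.mp this
    simpa [Int.gcd] using h1
  have hg2 : Int.gcd (n : ℤ) b = Nat.gcd n b.natAbs := by simp [Int.gcd]
  have hg12 : Int.gcd (n : ℤ) ((r : ℤ) * b) = Nat.gcd n r * Nat.gcd n b.natAbs := by
    have : Int.gcd (n : ℤ) ((r : ℤ) * b) = Nat.gcd n (r * b.natAbs) := by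
      simp [Int.gcd, Int.natAbs_mul]
    rw [this, gcd_mul_of_coprime n hcop]
  set g1 : ℕ := Nat.gcd n r with hG1
  set g2 : ℕ := Nat.gcd n b.natAbs with hG2
  have hdvd12 : g1 * g2 ∣ n := by
    rw [← hg12]
    have := Int.gcd_dvd_left (a := (n : ℤ)) (b := (r : ℤ) * b)
    exact_mod_cast this
  have hdvd2 : g2 ∣ n := Nat.gcd_dvd_left n b.natAbs
  have part5 : a1 = g1 * a2 := by
    rw [ha1, ha2, hg2, hg12]
    have h1 : g1 ∣ n / g2 := (Nat.dvd_div_iff_mul_dvd hdvd2).mpr (by rwa [mul_comm g2 g1])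
    rw [show g1 * g2 = g2 * g1 by ring, ← Nat.div_div_eq_div_mul,
      Nat.mul_div_cancel' h1]
  have ha2pos : 0 < a2 := by
    rw [ha2]
    have hgd : Int.gcd (n : ℤ) ((r : ℤ) * b) ∣ n := by
      have := Int.gcd_dvd_left (a := (n : ℤ)) (b := (r : ℤ) * b)
      exact_mod_cast this
    have hgp : 0 < Int.gcd (n : ℤ) ((r : ℤ) * b) :=
      Int.gcd_pos_iff.mpr (Or.inl (by exact_mod_cast hn.ne'))
    exact Nat.div_pos (Nat.le_of_dvd hn hgd) hgp
  refine ⟨part1, part2, part3, part4, part5, ?_⟩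
  rw [part3, part4]
  constructor
  · intro h
    have h1 : (a2 : ℤ) ∣ (a1 : ℤ) := by
      have := (mem_zmultiples_smul_ecGL hr (a2 : ℤ) (a1 : ℤ)).mp
        (h ▸ AddSubgroup.mem_zmultiples _)
      exact this
    have h2 : (a1 : ℤ) ∣ (a2 : ℤ) := (mem_zmultiples_smul_ecGL hr (a1 : ℤ) (a2 : ℤ)).mp
        (h ▸ AddSubgroup.mem_zmultiples _)
    have heq : a1 = a2 := Nat.dvd_antisymm (by exact_mod_cast h2) (by exact_mod_cast h1)
    have : g1 * a2 = 1 * a2 := by rw [one_mul, ← part5]; exact heq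
    exact Nat.eq_of_mul_eq_mul_right ha2pos this
  · intro h
    have : a1 = a2 := by rw [part5, h, one_mul]
    rw [this]
end

section
/- With the notation of the context, assume in addition that n is odd, and set e_c := e_1 + e_2. Then the elements k·e_c for 0 ≤ k ≤ n/d − 1 form a complete set of representatives for the quotient group Y/(Y^{sc} + Y_{Q,n}); in particular this quotient has order n/d. Moreover (n/d)·e_c ∈ Y_{Q,n}, so k ↦ class of k·e_c defines a group-homomorphic splitting of the natural surjection Y/Y_{Q,n} ↠ Y/(Y^{sc} + Y_{Q,n}), and since e_c is fixed by the coordinate swap (y_1, y_2) ↦ (y_2, y_1), this splitting is equivariant for the Weyl group action (the swap action on Y/Y_{Q,n}, and the trivial action on Y/(Y^{sc} + Y_{Q,n})). -/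
/-- The symmetric bilinear form on `Y = ℤ²` attached to the `n`-fold Kazhdan–Patterson
cover of `GL_2` (parameters `𝐩` and `𝐪 = 2𝐩 + 1`):
`B(e_1,e_1) = B(e_2,e_2) = 2𝐩` and `B(e_1,e_2) = 𝐪`. -/
def B2 (p : ℤ) (x y : ℤ × ℤ) : ℤ :=
  2 * p * (x.1 * y.1 + x.2 * y.2) + (2 * p + 1) * (x.1 * y.2 + x.2 * y.1)

lemma B2_add_left (p : ℤ) (a b y : ℤ × ℤ) :
    B2 p (a + b) y = B2 p a y + B2 p b y := by
  simp only [B2, Prod.fst_add, Prod.snd_add]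
  ring

lemma B2_neg_left (p : ℤ) (a y : ℤ × ℤ) : B2 p (-a) y = -B2 p a y := by
  simp only [B2, Prod.fst_neg, Prod.snd_neg]
  ring

/-- The lattice `Y_{Q,n} = {y ∈ Y : B(y, y') ∈ nℤ for all y' ∈ Y}`. -/
def YQn2 (n : ℕ) (p : ℤ) : AddSubgroup (ℤ × ℤ) where
  carrier := {y | ∀ y', (n : ℤ) ∣ B2 p y y'}
  zero_mem' := by
    intro y'
    simp [B2]
  add_mem' := by
    intro a b ha hb y'
    rw [B2_add_left]
    exact dvd_add (ha y') (hb y')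
  neg_mem' := by
    intro a ha y'
    rw [B2_neg_left]
    exact dvd_neg.mpr (ha y')

lemma key_dvd (n : ℕ) (hn : 0 < n) (p s : ℤ) :
    (n:ℤ) ∣ (4*p+1)*s ↔ ((n / Int.gcd (4*p+1) (n:ℤ) : ℕ) : ℤ) ∣ s := by
  set g : ℕ := Int.gcd (4*p+1) (n:ℤ) with hgdef
  have hg : (g:ℤ) ∣ (4*p+1) := Int.gcd_dvd_left _ _
  have hgn : g ∣ n := by
    have : (g:ℤ) ∣ (n:ℤ) := Int.gcd_dvd_right _ _
    exact_mod_cast this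
  have hgpos : 0 < g := by
    rcases Nat.eq_zero_or_pos g with h | h
    · exfalso
      have := Int.gcd_eq_zero_iff.mp h
      omega
    · exact h
  have hnm : n = g * (n / g) := (Nat.mul_div_cancel' hgn).symm
  constructor
  · intro h
    have h2 : (n:ℤ) ∣ (n:ℤ) * s := Dvd.intro s rfl
    have h3 : (n:ℤ) ∣ (Int.gcd ((4*p+1)*s) ((n:ℤ)*s) : ℤ) := Int.dvd_coe_gcd h h2
    rw [Int.gcd_mul_right] at h3
    have h4 : n ∣ g * s.natAbs := by exact_mod_cast h3
    rw [hnm] at h4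
    have h5 : n / g ∣ s.natAbs := (Nat.mul_dvd_mul_iff_left hgpos).mp h4
    exact Int.dvd_natAbs.mp (Int.natCast_dvd_natCast.mpr h5)
  · rintro ⟨t, rfl⟩
    obtain ⟨u, hu⟩ := hg
    refine ⟨u * t, ?_⟩
    have : (n:ℤ) = (g:ℤ) * ((n/g : ℕ):ℤ) := by exact_mod_cast congrArg (Nat.cast : ℕ → ℤ) hnm
    rw [hu, this]; ring

lemma mem_YQn2 (n : ℕ) (hn : 0 < n) (hodd : Odd n) (p : ℤ) (y : ℤ × ℤ) :
    y ∈ YQn2 n p ↔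
      ((n / Int.gcd (4*p+1) (n:ℤ) : ℕ) : ℤ) ∣ (y.1 + y.2) ∧ (n:ℤ) ∣ (y.1 - y.2) := by
  have hcop : IsCoprime (n:ℤ) 2 := by
    rw [Int.isCoprime_iff_gcd_eq_one]
    have h2 : Nat.gcd n 2 = 1 := hodd.coprime_two_right
    rw [show ((2:ℤ)) = ((2:ℕ):ℤ) by norm_num, Int.gcd_natCast_natCast]
    exact h2
  constructor
  · intro h
    have h1 := h (1,0)
    have h2 := h (0,1)
    simp only [B2] at h1 h2
    constructor
    · rw [← key_dvd n hn p]
      have : (4*p+1)*(y.1+y.2) = (2 * p * (y.1 * 1 + y.2 * 0) + (2 * p + 1) * (y.1 * 0 + y.2 * 1))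
          + (2 * p * (y.1 * 0 + y.2 * 1) + (2 * p + 1) * (y.1 * 1 + y.2 * 0)) := by ring
      rw [this]; exact dvd_add h1 h2
    · have : y.1 - y.2 = (2 * p * (y.1 * 0 + y.2 * 1) + (2 * p + 1) * (y.1 * 1 + y.2 * 0))
          - (2 * p * (y.1 * 1 + y.2 * 0) + (2 * p + 1) * (y.1 * 0 + y.2 * 1)) := by ring
      rw [this]; exact dvd_sub h2 h1
  · rintro ⟨hs, hd⟩ y'
    have hA : (n:ℤ) ∣ (4*p+1)*(y.1+y.2) := (key_dvd n hn p _).mpr hs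
    have hb1 : (n:ℤ) ∣ (2 * p * y.1 + (2*p+1) * y.2) := by
      have h2 : (n:ℤ) ∣ 2 * (2 * p * y.1 + (2*p+1) * y.2) := by
        have : 2 * (2 * p * y.1 + (2*p+1) * y.2) = (4*p+1)*(y.1+y.2) - (y.1 - y.2) := by ring
        rw [this]; exact dvd_sub hA hd
      exact hcop.dvd_of_dvd_mul_left h2
    have hb2 : (n:ℤ) ∣ ((2*p+1) * y.1 + 2 * p * y.2) := by
      have h2 : (n:ℤ) ∣ 2 * ((2*p+1) * y.1 + 2 * p * y.2) := by
        have : 2 * ((2*p+1) * y.1 + 2 * p * y.2) = (4*p+1)*(y.1+y.2) + (y.1 - y.2) := by ring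
        rw [this]; exact dvd_add hA hd
      exact hcop.dvd_of_dvd_mul_left h2
    have : B2 p y y' = (2 * p * y.1 + (2*p+1) * y.2) * y'.1 + ((2*p+1) * y.1 + 2 * p * y.2) * y'.2 := by
      simp only [B2]; ring
    rw [this]
    exact dvd_add (Dvd.dvd.mul_right hb1 _) (Dvd.dvd.mul_right hb2 _)

lemma mem_H2 (n : ℕ) (hn : 0 < n) (hodd : Odd n) (p : ℤ) (y : ℤ × ℤ) :
    y ∈ (AddSubgroup.zmultiples ((1, -1) : ℤ × ℤ) ⊔ YQn2 n p) ↔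
      ((n / Int.gcd (4*p+1) (n:ℤ) : ℕ) : ℤ) ∣ (y.1 + y.2) := by
  constructor
  · intro h
    obtain ⟨a, ha, b, hb, hab⟩ := AddSubgroup.mem_sup.mp h
    obtain ⟨t, rfl⟩ := AddSubgroup.mem_zmultiples_iff.mp ha
    have hb' := ((mem_YQn2 n hn hodd p b).mp hb).1
    have : y.1 + y.2 = b.1 + b.2 := by
      have h1 := congrArg Prod.fst hab
      have h2 := congrArg Prod.snd hab
      simp only [Prod.fst_add, Prod.snd_add, Prod.smul_fst, Prod.smul_snd,
        smul_eq_mul] at h1 h2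
      linarith
    rw [this]; exact hb'
  · intro hs
    obtain ⟨r, hr⟩ : ∃ r : ℤ, (n:ℤ) = 2*r+1 := by
      rcases hodd with ⟨r, hrr⟩; exact ⟨r, by exact_mod_cast hrr⟩
    set s : ℤ := y.1 + y.2 with hsdef
    have hz : ((r+1)*s, -(r*s)) ∈ YQn2 n p := by
      rw [mem_YQn2 n hn hodd p]
      constructor
      · simpa using (by rw [show (r+1)*s + -(r*s) = s by ring]; exact hs)
      · refine ⟨s, ?_⟩
        rw [hr]; ring
    refine AddSubgroup.mem_sup.mpr ⟨(y.1 - (r+1)*s) • ((1,-1) : ℤ×ℤ), ?_, ((r+1)*s, -(r*s)), hz, ?_⟩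
    · exact AddSubgroup.mem_zmultiples_iff.mpr ⟨_, rfl⟩
    · have : (y.1 - (r+1)*s) • ((1,-1) : ℤ×ℤ) = (y.1 - (r+1)*s, -(y.1 - (r+1)*s)) := by
        simp [Prod.ext_iff]
      rw [this]
      simp only [Prod.mk_add_mk, Prod.ext_iff]
      rw [hsdef]
      constructor <;> ring


/-- Assume `n` odd, and set `d = gcd(4𝐩+1, n)`,
`e_c = e_1 + e_2 = (1,1)`, `Y^{sc} = ℤ(e_1 - e_2) = ℤ·(1,-1)`.  Then the classes of
`k·e_c` for `0 ≤ k ≤ n/d - 1` form a complete set of representatives of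
`Y/(Y^{sc} + Y_{Q,n})` (which therefore has order `n/d`); moreover
`(n/d)·e_c ∈ Y_{Q,n}`, so `k ↦ class of k·e_c` defines a group-homomorphic splitting `s`
of the natural surjection `Y/Y_{Q,n} ↠ Y/(Y^{sc} + Y_{Q,n})`, and since `e_c` is fixed
by the coordinate swap this splitting is equivariant for the Weyl action (swap on
`Y/Y_{Q,n}`, trivial on `Y/(Y^{sc} + Y_{Q,n})`): each value of `s` is a swap-fixed
class. -/
theorem stmt18 (n : ℕ) (hn : 0 < n) (hodd : Odd n) (p : ℤ) :
    (∀ x : (ℤ × ℤ) ⧸ (AddSubgroup.zmultiples ((1, -1) : ℤ × ℤ) ⊔ YQn2 n p),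
        ∃! k : ℕ, k < n / Int.gcd (4 * p + 1) (n : ℤ) ∧
          QuotientAddGroup.mk ((k : ℤ) • ((1, 1) : ℤ × ℤ)) = x) ∧
    Nat.card ((ℤ × ℤ) ⧸ (AddSubgroup.zmultiples ((1, -1) : ℤ × ℤ) ⊔ YQn2 n p))
        = n / Int.gcd (4 * p + 1) (n : ℤ) ∧
    ((n / Int.gcd (4 * p + 1) (n : ℤ) : ℕ) : ℤ) • ((1, 1) : ℤ × ℤ) ∈ YQn2 n p ∧
    ∃ s : ((ℤ × ℤ) ⧸ (AddSubgroup.zmultiples ((1, -1) : ℤ × ℤ) ⊔ YQn2 n p)) →+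
        ((ℤ × ℤ) ⧸ YQn2 n p),
      (∀ k : ℤ, s (QuotientAddGroup.mk (k • ((1, 1) : ℤ × ℤ)))
          = QuotientAddGroup.mk (k • ((1, 1) : ℤ × ℤ))) ∧
      (∀ (x : (ℤ × ℤ) ⧸ (AddSubgroup.zmultiples ((1, -1) : ℤ × ℤ) ⊔ YQn2 n p)) (y : ℤ × ℤ),
          s x = QuotientAddGroup.mk y →
            (QuotientAddGroup.mk y :
              (ℤ × ℤ) ⧸ (AddSubgroup.zmultiples ((1, -1) : ℤ × ℤ) ⊔ YQn2 n p)) = x) ∧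
      (∀ (x : (ℤ × ℤ) ⧸ (AddSubgroup.zmultiples ((1, -1) : ℤ × ℤ) ⊔ YQn2 n p)) (y : ℤ × ℤ),
          s x = QuotientAddGroup.mk y → s x = QuotientAddGroup.mk (Prod.swap y)) := by
  set m : ℕ := n / Int.gcd (4 * p + 1) (n : ℤ) with hmdef
  have hdvd : Int.gcd (4 * p + 1) (n : ℤ) ∣ n := by
    have : (Int.gcd (4 * p + 1) (n:ℤ) : ℤ) ∣ (n:ℤ) := Int.gcd_dvd_right _ _
    exact_mod_cast this
  have hmn : m ∣ n := Nat.div_dvd_of_dvd hdvd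
  have hmodd : Odd m := by
    obtain ⟨k, hk⟩ := hmn
    rcases Nat.even_or_odd m with he | ho
    · exfalso
      rw [hk] at hodd
      exact (Nat.not_odd_iff_even.mpr (he.mul_right k)) hodd
    · exact ho
  have hm : 0 < m := by rcases hmodd with ⟨r, hr⟩; omega
  have hmz : (0:ℤ) < (m:ℤ) := by exact_mod_cast hm
  have hmcop2 : IsCoprime ((m:ℤ)) 2 := by
    rw [Int.isCoprime_iff_gcd_eq_one]
    have h2 : Nat.gcd m 2 = 1 := hmodd.coprime_two_right
    rw [show ((2:ℤ)) = ((2:ℕ):ℤ) by norm_num, Int.gcd_natCast_natCast]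
    exact h2
  obtain ⟨rc, hrc⟩ : ∃ rc : ℤ, (m:ℤ) = 2*rc+1 := by
    rcases hmodd with ⟨r, hr⟩; exact ⟨r, by exact_mod_cast hr⟩
  set c : ℤ := rc + 1 with hcdef
  have hc2 : 2*c = (m:ℤ)+1 := by rw [hcdef, hrc]; ring
  have hsm : ∀ k : ℤ, k • ((1,1) : ℤ×ℤ) = (k, k) := by
    intro k; simp [Prod.ext_iff]
  have hmemY : ∀ a : ℤ, (a • ((1,1):ℤ×ℤ) ∈ YQn2 n p ↔ (m:ℤ) ∣ 2*a) := by
    intro a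
    rw [hsm, mem_YQn2 n hn hodd p]
    simp only [← hmdef]
    constructor
    · intro ⟨h1, _⟩; rw [show 2*a = a + a by ring]; exact h1
    · intro h1; exact ⟨by rw [show a + a = 2*a by ring]; exact h1, by simp⟩
  have hhalf : ∀ a : ℤ, (m:ℤ) ∣ 2*a → (m:ℤ) ∣ a := fun a h =>
    hmcop2.dvd_of_dvd_mul_left h
  have part1 : ∀ x : (ℤ × ℤ) ⧸ (AddSubgroup.zmultiples ((1, -1) : ℤ × ℤ) ⊔ YQn2 n p),
      ∃! k : ℕ, k < m ∧ QuotientAddGroup.mk ((k : ℤ) • ((1, 1) : ℤ × ℤ)) = x := by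
    intro x
    induction x using QuotientAddGroup.induction_on with
    | H y =>
      have hnon : 0 ≤ (c*(y.1+y.2)) % (m:ℤ) := Int.emod_nonneg _ hmz.ne'
      have hlt : (c*(y.1+y.2)) % (m:ℤ) < (m:ℤ) := Int.emod_lt_of_pos _ hmz
      have hdivK : (m:ℤ) ∣ (y.1 + y.2) - 2*((c*(y.1+y.2)) % (m:ℤ)) := by
        rw [Int.emod_def]
        refine ⟨-(y.1+y.2) + 2*((c*(y.1+y.2))/(m:ℤ)), ?_⟩
        linear_combination (-(y.1+y.2))*hc2
      have hcast : (((c*(y.1+y.2)) % (m:ℤ)).toNat : ℤ) = (c*(y.1+y.2)) % (m:ℤ) :=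
        Int.toNat_of_nonneg hnon
      refine ⟨((c*(y.1+y.2)) % (m:ℤ)).toNat, ⟨by omega, ?_⟩, ?_⟩
      · rw [QuotientAddGroup.eq, mem_H2 n hn hodd p, hsm]
        simp only [Prod.fst_add, Prod.snd_add, Prod.fst_neg, Prod.snd_neg, ← hmdef]
        rw [hcast]
        obtain ⟨t, ht⟩ := hdivK
        exact ⟨t, by linarith⟩
      · rintro k2 ⟨hk2, he2⟩
        rw [QuotientAddGroup.eq, mem_H2 n hn hodd p, hsm] at he2
        simp only [Prod.fst_add, Prod.snd_add, Prod.fst_neg, Prod.snd_neg, ← hmdef] at he2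
        obtain ⟨t1, ht1⟩ := he2
        obtain ⟨t2, ht2⟩ := hdivK
        have h2 : 2*((k2:ℤ) - (c*(y.1+y.2)) % (m:ℤ)) = (m:ℤ)*(t2 - t1) := by
          linear_combination ht2 - ht1
        have hfin : (m:ℤ) ∣ ((k2:ℤ) - (c*(y.1+y.2)) % (m:ℤ)) := hhalf _ ⟨t2 - t1, h2⟩
        have hb1 : (k2:ℤ) < (m:ℤ) := by exact_mod_cast hk2
        have hk2n : (0:ℤ) ≤ (k2:ℤ) := Int.natCast_nonneg k2
        obtain ⟨t, ht⟩ := hfin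
        have htz : t = 0 := by
          rcases lt_trichotomy t 0 with h | h | h
          · nlinarith
          · exact h
          · nlinarith
        rw [htz, mul_zero] at ht
        omega
  refine ⟨part1, ?_, ?_, ?_⟩
  · have hb : Function.Bijective (fun k : Fin m =>
        (QuotientAddGroup.mk ((k : ℤ) • ((1, 1) : ℤ × ℤ)) :
          (ℤ × ℤ) ⧸ (AddSubgroup.zmultiples ((1, -1) : ℤ × ℤ) ⊔ YQn2 n p))) := by
      constructor
      · intro a b hab
        obtain ⟨k, _, hu⟩ := part1 (QuotientAddGroup.mk ((a : ℤ) • ((1, 1) : ℤ × ℤ)))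
        have ha' : (a : ℕ) = k := hu a ⟨a.2, rfl⟩
        have hb' : (b : ℕ) = k := hu b ⟨b.2, hab.symm⟩
        exact Fin.ext (ha'.trans hb'.symm)
      · intro x
        obtain ⟨k, ⟨hk, he⟩, _⟩ := part1 x
        exact ⟨⟨k, hk⟩, he⟩
    calc Nat.card ((ℤ × ℤ) ⧸ (AddSubgroup.zmultiples ((1, -1) : ℤ × ℤ) ⊔ YQn2 n p))
        = Nat.card (Fin m) := (Nat.card_congr (Equiv.ofBijective _ hb)).symm
      _ = m := by simp
  · exact (hmemY (m:ℤ)).mpr ⟨2, by ring⟩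
  · set H := AddSubgroup.zmultiples ((1, -1) : ℤ × ℤ) ⊔ YQn2 n p with hHdef
    have hYH : ∀ z : ℤ × ℤ, z ∈ YQn2 n p → z ∈ H := fun z hz => AddSubgroup.mem_sup_right hz
    set φ : (ℤ × ℤ) →+ ((ℤ × ℤ) ⧸ YQn2 n p) := AddMonoidHom.mk'
      (fun y => QuotientAddGroup.mk ((c * (y.1 + y.2)) • ((1,1) : ℤ×ℤ)))
      (by
        intro a b
        rw [← QuotientAddGroup.mk_add, ← add_smul]
        congr 2
        simp only [Prod.fst_add, Prod.snd_add]
        ring) with hφdef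
    have hφmk : ∀ y : ℤ × ℤ, φ y = QuotientAddGroup.mk ((c * (y.1 + y.2)) • ((1,1) : ℤ×ℤ)) :=
      fun y => rfl
    have hker : ∀ y ∈ H, φ y = 0 := by
      intro y hy
      rw [hφmk, QuotientAddGroup.eq_zero_iff, hmemY]
      rw [hHdef, mem_H2 n hn hodd p] at hy
      simp only [← hmdef] at hy
      obtain ⟨t, ht⟩ := hy
      exact ⟨((m:ℤ)+1)*t, by rw [show 2*(c*(y.1+y.2)) = 2*c*(y.1+y.2) by ring, hc2, ht]; ring⟩
    refine ⟨QuotientAddGroup.lift H φ (fun y hy => (AddMonoidHom.mem_ker).mpr (hker y hy)), ?_, ?_, ?_⟩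
    · intro k
      rw [QuotientAddGroup.lift_mk, hφmk]
      simp only [Prod.smul_fst, Prod.smul_snd, smul_eq_mul, mul_one]
      rw [QuotientAddGroup.eq, ← neg_smul, ← add_smul, hmemY]
      exact ⟨-2*k, by linear_combination (-2*k)*hc2⟩
    · intro x y hxy
      induction x using QuotientAddGroup.induction_on with
      | H z =>
        rw [QuotientAddGroup.lift_mk, hφmk, QuotientAddGroup.eq] at hxy
        have h1 : -((c * (z.1 + z.2)) • ((1,1):ℤ×ℤ)) + y ∈ H := hYH _ hxy
        have h2 : -z + (c * (z.1 + z.2)) • ((1,1):ℤ×ℤ) ∈ H := by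
          rw [hHdef, mem_H2 n hn hodd p]
          simp only [Prod.fst_add, Prod.snd_add, Prod.fst_neg, Prod.snd_neg, Prod.smul_fst,
            Prod.smul_snd, smul_eq_mul, mul_one, ← hmdef]
          exact ⟨z.1 + z.2, by linear_combination (z.1+z.2)*hc2⟩
        rw [QuotientAddGroup.eq]
        have h3 := AddSubgroup.neg_mem H (AddSubgroup.add_mem H h2 h1)
        have heq : -((-z + (c * (z.1 + z.2)) • ((1,1):ℤ×ℤ)) +
            (-((c * (z.1 + z.2)) • ((1,1):ℤ×ℤ)) + y)) = -y + z := by abel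
        rwa [heq] at h3
    · intro x y hxy
      induction x using QuotientAddGroup.induction_on with
      | H z =>
        rw [QuotientAddGroup.lift_mk, hφmk] at hxy ⊢
        have hxy2 := hxy
        rw [QuotientAddGroup.eq] at hxy2
        have hd : (n:ℤ) ∣ (y.1 - y.2) := by
          have := ((mem_YQn2 n hn hodd p _).mp hxy2).2
          rw [hsm] at this
          simp only [Prod.fst_add, Prod.snd_add, Prod.fst_neg, Prod.snd_neg] at this
          obtain ⟨t, ht⟩ := this
          exact ⟨t, by linarith⟩
        have hswap : (QuotientAddGroup.mk (Prod.swap y) : (ℤ×ℤ) ⧸ YQn2 n p)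
            = QuotientAddGroup.mk y := by
          rw [QuotientAddGroup.eq, mem_YQn2 n hn hodd p]
          simp only [Prod.fst_add, Prod.snd_add, Prod.fst_neg, Prod.snd_neg, Prod.fst_swap,
            Prod.snd_swap]
          constructor
          · exact ⟨0, by ring⟩
          · obtain ⟨t, ht⟩ := hd
            exact ⟨2*t, by linarith⟩
        rw [hswap]
        exact hxy
end
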